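/- arXiv:1803.11340 — 7 statements merged into one kernel-verified Lean document; each statement's English description precedes it below -/
import Mathlib

section
/- In the Texas Chainsaw Josephus game with n soldiers and parameter k, if n = a(k+1)^b + km where a ≡ n (mod k), 1 ≤ a ≤ k, and b is the largest nonnegative integer such that n - a(k+1)^b is a nonnegative multiple of k, then the surviving soldier is the one labeled (k+1)m. -/
/-- One soldier (the head of the list) is skipped: moved to the back of the circle. -/
def skipOne (s : List (ℕ × ℕ)) : List (ℕ × ℕ) :=
  match s with
  | [] => []
  | p :: rest => rest ++ [p]

/-- The next alive soldier (head) loses one life; removed if dead.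
    Does nothing once at most one soldier remains. -/
def hitOne (s : List (ℕ × ℕ)) : List (ℕ × ℕ) :=
  match s with
  | [] => []
  | [p] => [p]
  | (x, l) :: rest => if l ≤ 1 then rest else rest ++ [(x, l - 1)]

/-- One round: skip one soldier, then hit the next `k` soldiers. -/
def felineRound (k : ℕ) (s : List (ℕ × ℕ)) : List (ℕ × ℕ) :=
  hitOne^[k] (skipOne s)

/-- Run the game with the given fuel, returning the survivor's label. -/
def felineRun (k : ℕ) : ℕ → List (ℕ × ℕ) → ℕ
  | 0, s => (s.headD (0, 0)).1
  | fuel + 1, s =>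
    if s.length ≤ 1 then (s.headD (0, 0)).1
    else felineRun k fuel (felineRound k s)

/-- The survivor of the Feline Texas Chainsaw Josephus game with `n` soldiers,
    parameter `k`, and `ℓ` lives each. -/
def felineT (n k ℓ : ℕ) : ℕ :=
  felineRun k (n * ℓ + 1) ((List.range n).map (fun i => (i, ℓ)))

/-- The survivor of the Texas Chainsaw Josephus game (one life each). -/
def chainsawT (n k : ℕ) : ℕ := felineT n k 1

/-- One-second steps of the one-life game, recording the elimination order.
    `c` is the number of eliminations remaining before the next skip. -/
def elimSteps (k : ℕ) : ℕ → ℕ → List ℕ → List ℕ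
  | 0, _, s => s
  | fuel + 1, c, s =>
    match s with
    | [] => []
    | [x] => [x]
    | a :: rest =>
      if c = 0 then elimSteps k fuel k (rest ++ [a])
      else a :: elimSteps k fuel (c - 1) rest

/-- The order in which soldiers are eliminated (the survivor is listed last). -/
def elimOrder (n k : ℕ) : List ℕ := elimSteps k ((k + 2) * (n + 1) * (n + 1)) 0 (List.range n)

/-- The second at which soldier `x` is eliminated (1-indexed position in the
    elimination order). -/
def elimTime (n k x : ℕ) : ℕ := (elimOrder n k).idxOf x + 1


open List

lemma hit_iter : ∀ (k : ℕ) (t : List ℕ), t ≠ [] →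
    hitOne^[k] (t.map (fun x => (x,1))) = (t.drop (min k (t.length - 1))).map (fun x => (x,1)) := by
  intro k
  induction k with
  | zero => intro t ht; simp
  | succ j ih =>
    intro t ht
    rw [Function.iterate_succ_apply]
    match t with
    | [x] =>
      have h1 : hitOne ([x].map (fun x => (x,1))) = [x].map (fun x => (x,1)) := by
        simp [hitOne]
      rw [h1, ih [x] (by simp)]
      simp
    | x :: y :: t' =>
      have h1 : hitOne ((x::y::t').map (fun x => (x,1))) = (y::t').map (fun x => (x,1)) := by
        simp [hitOne]
      rw [h1, ih (y::t') (by simp)]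
      congr 1
      have h2 : min (j+1) ((x::y::t').length - 1) = min j ((y::t').length - 1) + 1 := by
        simp
      rw [h2]
      rfl

lemma roundEq1 (k : ℕ) (l : List ℕ) :
    felineRound k (l.map (fun x => (x,1))) =
    (l.drop (k+1) ++ l.take 1).map (fun x => (x,1)) := by
  match l with
  | [] =>
    show hitOne^[k] (skipOne []) = _
    rw [show skipOne [] = [] from rfl, Function.iterate_fixed (by simp [hitOne])]
    simp
  | x :: l' =>
    show hitOne^[k] (skipOne _) = _
    have hs : skipOne ((x::l').map (fun x => (x,1))) = (l' ++ [x]).map (fun x => (x,1)) := by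
      simp [skipOne]
    rw [hs, hit_iter k _ (by simp)]
    congr 1
    have hlen : (l' ++ [x]).length - 1 = l'.length := by simp
    rw [hlen]
    rcases le_or_gt k l'.length with h | h
    · rw [min_eq_left h, List.drop_append]
      have : k - l'.length = 0 := by omega
      simp [this]
    · rw [min_eq_right (le_of_lt h), List.drop_append]
      simp
      omega

lemma run_map (k : ℕ) : ∀ (fuel : ℕ) (l : List ℕ) (f : ℕ → ℕ), l ≠ [] →
    felineRun k fuel ((l.map f).map (fun x => (x,1))) =
      f (felineRun k fuel (l.map (fun x => (x,1)))) := by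
  intro fuel
  induction fuel with
  | zero =>
    intro l f hl
    match l with
    | x :: l' => simp [felineRun]
  | succ fu ih =>
    intro l f hl
    simp only [felineRun, length_map]
    by_cases h : l.length ≤ 1
    · rw [if_pos h, if_pos h]
      match l with
      | x :: l' => simp
    · rw [if_neg h, if_neg h, roundEq1, roundEq1]
      have hmap : (l.map f).drop (k+1) ++ (l.map f).take 1
          = (l.drop (k+1) ++ l.take 1).map f := by
        simp
      rw [hmap]
      apply ih
      match l with
      | x :: l' => simp

lemma run_fuel_step (k : ℕ) (hk : 1 ≤ k) : ∀ (fuel : ℕ) (l : List ℕ), l.length ≤ fuel →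
    felineRun k (fuel+1) (l.map (fun x => (x,1))) = felineRun k fuel (l.map (fun x => (x,1))) := by
  intro fuel
  induction fuel with
  | zero =>
    intro l hl
    match l, hl with
    | [], _ => simp [felineRun]
  | succ fu ih =>
    intro l hl
    by_cases h : (l.map (fun x => (x,1))).length ≤ 1
    · conv_lhs => rw [felineRun]
      conv_rhs => rw [felineRun]
      rw [if_pos h, if_pos h]
    · conv_lhs => rw [felineRun]
      conv_rhs => rw [felineRun]
      rw [if_neg h, if_neg h, roundEq1]
      apply ih
      simp only [length_map] at h
      simp
      omega

lemma run_fuel (k : ℕ) (hk : 1 ≤ k) : ∀ (d fuel : ℕ) (l : List ℕ), l.length ≤ fuel →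
    felineRun k (fuel+d) (l.map (fun x => (x,1))) = felineRun k fuel (l.map (fun x => (x,1))) := by
  intro d
  induction d with
  | zero => intro fuel l hl; rfl
  | succ d ih =>
    intro fuel l hl
    rw [show fuel + (d+1) = (fuel + d) + 1 by omega,
        run_fuel_step k hk (fuel+d) l (by omega), ih fuel l hl]

lemma chainsawT_def (n k : ℕ) :
    chainsawT n k = felineRun k (n+1) ((List.range n).map (fun x => (x,1))) := by
  show felineRun k (n*1+1) _ = _
  rw [Nat.mul_one]

lemma chainsaw_base (n k : ℕ) (hn : 1 ≤ n) (h : n ≤ k+1) : chainsawT n k = 0 := by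
  rw [chainsawT_def]
  match n, hn with
  | 1, _ => simp [felineRun, List.range_succ]
  | (m+2), _ =>
    rw [felineRun]
    rw [if_neg (by simp), roundEq1]
    have h1 : (List.range (m+2)).drop (k+1) = [] := by
      apply List.drop_eq_nil_of_le
      simp; omega
    have h2 : (List.range (m+2)).take 1 = [0] := by
      rw [List.take_range]
      rw [show min 1 (m+2) = 1 by omega]; decide
    rw [h1, h2]
    rw [felineRun]
    simp

lemma range_round (n k : ℕ) (h : k + 1 ≤ n) :
    (List.range n).drop (k+1) ++ (List.range n).take 1 =
    (List.range (n-k)).map (fun i => (i + (k+1)) % n) := by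
  have hn1 : 1 ≤ n := by omega
  apply List.ext_getElem
  · simp; omega
  · intro i h1 h2
    simp only [List.length_append, List.length_drop, List.length_take, List.length_range] at h1
    rw [List.getElem_map, List.getElem_range]
    rcases lt_or_ge i (n - (k+1)) with hi | hi
    · rw [List.getElem_append_left (by simp; omega)]
      rw [List.getElem_drop, List.getElem_range]
      rw [Nat.mod_eq_of_lt (by omega)]
      omega
    · have hieq : i = n - (k+1) := by omega
      rw [List.getElem_append_right (by simp; omega)]
      have ht : (List.range n).take 1 = [0] := by
        rw [List.take_range]
        rw [show min 1 n = 1 by omega]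
        decide
      simp only [ht, List.getElem_singleton]
      rw [show i + (k+1) = n by omega, Nat.mod_self]


lemma run_fuel_eq (k : ℕ) (hk : 1 ≤ k) (f1 f2 : ℕ) (l : List ℕ)
    (h1 : l.length ≤ f1) (h2 : l.length ≤ f2) :
    felineRun k f1 (l.map (fun x => (x,1))) = felineRun k f2 (l.map (fun x => (x,1))) := by
  have e1 := run_fuel k hk (f1 - l.length) l.length l le_rfl
  have e2 := run_fuel k hk (f2 - l.length) l.length l le_rfl
  rw [show l.length + (f1 - l.length) = f1 by omega] at e1
  rw [show l.length + (f2 - l.length) = f2 by omega] at e2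
  rw [e1, e2]

lemma chainsaw_rec (n k : ℕ) (hk : 1 ≤ k) (h : k+2 ≤ n) :
    chainsawT n k = (chainsawT (n-k) k + (k+1)) % n := by
  rw [chainsawT_def, chainsawT_def]
  rw [felineRun]
  rw [if_neg (by simp; omega), roundEq1, range_round n k (by omega)]
  have hne : List.range (n-k) ≠ [] := by simp; omega
  rw [run_fuel_eq k hk n ((n-k)+1) ((List.range (n-k)).map (fun i => (i + (k+1)) % n)) (by simp) (by simp),
      run_map k _ _ _ hne]

lemma formula_aux (k a : ℕ) (hk : 1 ≤ k) (ha1 : 1 ≤ a) (ha2 : a ≤ k) :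
    ∀ n, ∀ b m, n = a * (k+1)^b + k*m → m < a * (k+1)^b → chainsawT n k = (k+1)*m := by
  intro n
  induction n using Nat.strong_induction_on with
  | _ n ih =>
  intro b m heq hlt
  have hpow : 1 ≤ a * (k+1)^b := Nat.mul_pos ha1 (Nat.pow_pos (n := b) (by omega))
  rcases le_or_gt n (k+1) with h | h
  · -- base case: m must be 0
    have hm : m = 0 := by
      by_contra hm
      have hkm : k ≤ k * m := Nat.le_mul_of_pos_right k (by omega)
      omega
    subst hm
    rw [chainsaw_base n k (by omega) h]
    simp
  · rw [chainsaw_rec n k hk (by omega)]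
    rcases Nat.eq_zero_or_pos m with hm | hm
    · subst hm
      -- n = a*(k+1)^b, b ≥ 1
      have hb : b ≠ 0 := by
        rintro rfl
        simp at heq
        omega
      obtain ⟨b', rfl⟩ : ∃ b', b = b' + 1 := ⟨b - 1, by omega⟩
      set M := a * (k+1)^b' with hM
      have hM1 : 1 ≤ M := Nat.mul_pos ha1 (Nat.pow_pos (n := b') (by omega))
      have hn : n = M + k * M := by rw [heq, hM]; ring
      have hkM : k * (M-1) + k * 1 = k * M := by rw [← Nat.mul_add]; congr 1; omega
      have hsub : n - k = M + k * (M - 1) := by omega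
      have ihv := ih (n-k) (by omega) b' (M-1) hsub (by omega)
      rw [ihv]
      have : (k+1) * (M-1) + (k+1) = (k+1) * M := by
        rw [← Nat.mul_succ]; congr 1; omega
      rw [this, show (k+1) * M = n by rw [hn]; ring, Nat.mod_self]
      simp
    · -- m ≥ 1
      have hsub : n - k = a * (k+1)^b + k * (m-1) := by
        have : k * (m-1) + k * 1 = k * m := by rw [← Nat.mul_add]; congr 1; omega
        omega
      have ihv := ih (n-k) (by omega) b (m-1) hsub (by omega)
      rw [ihv]
      have : (k+1) * (m-1) + (k+1) = (k+1) * m := by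
        rw [← Nat.mul_succ]; congr 1; omega
      rw [this]
      apply Nat.mod_eq_of_lt
      have : (k+1) * m = k * m + m := by ring
      omega

/-- Theorem (Beatty–Sullivan): If `n = a(k+1)^b + km` where `a ≡ n (mod k)`,
`1 ≤ a ≤ k`, and `b` is as large as possible, then the survivor of the
Texas Chainsaw Josephus game is soldier `(k+1)m`. -/
theorem chainsaw_survivor_formula (n k a b m : ℕ)
    (hn : 1 ≤ n) (hk : 1 ≤ k)
    (ha1 : 1 ≤ a) (ha2 : a ≤ k) (hmod : a ≡ n [MOD k])
    (heq : n = a * (k + 1) ^ b + k * m)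
    (hmax : ∀ b' m' : ℕ, n = a * (k + 1) ^ b' + k * m' → b' ≤ b) :
    chainsawT n k = (k + 1) * m := by
  have hlt : m < a * (k+1)^b := by
    by_contra hge
    push_neg at hge
    set M := a * (k+1)^b with hM
    have h1 : k * (m - M) + k * M = k * m := by rw [← Nat.mul_add]; congr 1; omega
    have h2 : a * (k+1)^(b+1) = M + k * M := by rw [hM]; ring
    have h3 : n = a * (k+1)^(b+1) + k * (m - M) := by omega
    have := hmax (b+1) (m - M) h3
    omega
  exact formula_aux k a hk ha1 ha2 n b m heq hlt
end

section
/- In the Texas Chainsaw Josephus game, if n = a(k+1)^b for some integers 1 ≤ a ≤ k and b ≥ 0, then the soldier labeled 0 survives: T(a(k+1)^b, k) = 0. -/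
lemma hitOne_cons (x c : ℕ) (rest : List (ℕ × ℕ)) (h : rest ≠ []) (hc : c ≤ 1) :
    hitOne ((x, c) :: rest) = rest := by
  cases rest with
  | nil => exact absurd rfl h
  | cons y t => simp [hitOne, hc]

lemma hitOne_single (p : ℕ × ℕ) : hitOne [p] = [p] := by simp [hitOne]

lemma hitOne_iter_drop : ∀ (j : ℕ) (l : List (ℕ × ℕ)), j + 1 ≤ l.length →
    (∀ p ∈ l, p.2 ≤ 1) → hitOne^[j] l = l.drop j := by
  intro j
  induction j with
  | zero => intro l _ _; simp
  | succ j ih =>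
    intro l hl hlive
    match l with
    | (x, c) :: rest =>
      have hr : rest ≠ [] := by
        intro h; simp [h] at hl
      rw [Function.iterate_succ_apply, hitOne_cons x c rest hr (hlive (x, c) (by simp))]
      rw [ih rest (by simpa using hl) (fun p hp => hlive p (by simp [hp]))]
      simp

lemma hitOne_iter_last : ∀ (j : ℕ) (l : List (ℕ × ℕ)) (q : ℕ × ℕ), l.length ≤ j →
    (∀ p ∈ l, p.2 ≤ 1) → hitOne^[j] (l ++ [q]) = [q] := by
  intro j
  induction j with
  | zero => intro l q hl _; simp at hl; simp [hl]
  | succ j ih =>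
    intro l q hl hlive
    match l with
    | [] =>
      rw [Function.iterate_succ_apply]
      simpa [hitOne_single] using ih [] q (by simp) (by simp)
    | (x, c) :: rest =>
      rw [Function.iterate_succ_apply, List.cons_append,
        hitOne_cons x c (rest ++ [q]) (by simp) (hlive (x, c) (by simp))]
      exact ih rest q (by simpa using hl) (fun p hp => hlive p (by simp [hp]))

lemma felineRound_eq (k : ℕ) (t : List (ℕ × ℕ)) (ht : k + 1 ≤ t.length)
    (hlive : ∀ p ∈ t, p.2 ≤ 1) :
    felineRound k t = t.drop (k + 1) ++ t.take 1 := by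
  cases t with
  | nil => simp at ht
  | cons hd rest =>
    have hr : k ≤ rest.length := by simp at ht; omega
    have hlive2 : ∀ q ∈ rest ++ [hd], q.2 ≤ 1 := by
      intro q hq
      rcases List.mem_append.1 hq with h | h
      · exact hlive q (by simp [h])
      · simp at h
        exact hlive q (by simp [h])
    rw [felineRound, show skipOne (hd :: rest) = rest ++ [hd] from rfl]
    rw [hitOne_iter_drop k (rest ++ [hd]) (by simp; exact hr) hlive2]
    rw [List.drop_append_of_le_length hr]
    simp

lemma felineRun_single (k f : ℕ) (p : ℕ × ℕ) : felineRun k f [p] = p.1 := by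
  cases f <;> simp [felineRun]

lemma getD_live (s : List (ℕ × ℕ)) (hlive : ∀ p ∈ s, p.2 ≤ 1) (i : ℕ) :
    (s.getD i (0, 0)).2 ≤ 1 := by
  by_cases h : i < s.length
  · rw [List.getD_eq_getElem s _ h]
    exact hlive _ (List.getElem_mem h)
  · rw [List.getD_eq_default s _ (by omega)]
    norm_num

lemma drop_take_one (s : List (ℕ × ℕ)) (m : ℕ) (hm : m < s.length) :
    (s.drop m).take 1 = [s.getD m (0, 0)] := by
  rw [List.drop_eq_getElem_cons hm, List.getD_eq_getElem s _ hm]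
  rfl

lemma felineRound_small (k : ℕ) (hd : ℕ × ℕ) (rest : List (ℕ × ℕ))
    (h : rest.length ≤ k) (hlive : ∀ p ∈ rest, p.2 ≤ 1) :
    felineRound k (hd :: rest) = [hd] := by
  rw [felineRound, show skipOne (hd :: rest) = rest ++ [hd] from rfl]
  exact hitOne_iter_last k rest hd h hlive

lemma passA (k : ℕ) (hk : 1 ≤ k) : ∀ (j : ℕ) (s : List (ℕ × ℕ)) (fuel : ℕ),
    j * (k + 1) ≤ s.length → j ≤ fuel → (∀ p ∈ s, p.2 ≤ 1) →
    felineRun k fuel s = felineRun k (fuel - j)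
      (s.drop (j * (k + 1)) ++ (List.range j).map (fun i => s.getD (i * (k + 1)) (0, 0))) := by
  intro j
  induction j with
  | zero => intro s fuel _ _ _; simp
  | succ j ih =>
    intro s fuel h1 h2 hlive
    have h1' : j * (k + 1) + (k + 1) ≤ s.length := by
      have := h1; rw [Nat.succ_mul] at this; omega
    rw [ih s fuel (by omega) (by omega) hlive]
    set D := s.drop (j * (k + 1)) with hD
    set P := (List.range j).map (fun i => s.getD (i * (k + 1)) (0, 0)) with hP
    have hDlen : D.length = s.length - j * (k + 1) := by simp [hD]
    have hDk : k + 1 ≤ D.length := by omega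
    have hlivet : ∀ p ∈ D ++ P, p.2 ≤ 1 := by
      intro p hp
      rcases List.mem_append.1 hp with h | h
      · exact hlive p (List.mem_of_mem_drop h)
      · simp only [hP, List.mem_map, List.mem_range] at h
        obtain ⟨i, _, rfl⟩ := h
        exact getD_live s hlive _
    rw [show fuel - j = (fuel - (j + 1)) + 1 from by omega]
    rw [show felineRun k ((fuel - (j + 1)) + 1) (D ++ P)
        = if (D ++ P).length ≤ 1 then ((D ++ P).headD (0, 0)).1
          else felineRun k (fuel - (j + 1)) (felineRound k (D ++ P)) from rfl]
    rw [if_neg (by simp; omega)]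
    rw [felineRound_eq k (D ++ P) (by simp; omega) hlivet]
    rw [List.drop_append_of_le_length hDk, List.take_append_of_le_length (by omega)]
    rw [hD, List.drop_drop, drop_take_one s (j * (k + 1)) (by omega)]
    rw [show j * (k + 1) + (k + 1) = (j + 1) * (k + 1) from by ring]
    rw [List.range_succ, List.map_append, List.append_assoc]
    simp [hP]

lemma mainLemma (k : ℕ) (hk : 1 ≤ k) : ∀ (b a fuel : ℕ) (s : List (ℕ × ℕ)),
    1 ≤ a → a ≤ k → s.length = a * (k + 1) ^ b → s.length ≤ fuel →
    (∀ p ∈ s, p.2 ≤ 1) → felineRun k fuel s = (s.headD (0, 0)).1 := by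
  intro b
  induction b with
  | zero =>
    intro a fuel s ha1 ha2 hlen hfuel hlive
    simp only [pow_zero, mul_one] at hlen
    cases s with
    | nil => simp at hlen; omega
    | cons hd rest =>
      cases rest with
      | nil => simpa using felineRun_single k fuel hd
      | cons q t =>
        have hlen2 : 2 ≤ (hd :: q :: t).length := by simp
        obtain ⟨f, rfl⟩ : ∃ f, fuel = f + 1 := ⟨fuel - 1, by omega⟩
        rw [show felineRun k (f + 1) (hd :: q :: t)
            = if (hd :: q :: t).length ≤ 1 then ((hd :: q :: t).headD (0, 0)).1
              else felineRun k f (felineRound k (hd :: q :: t)) from rfl]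
        rw [if_neg (by omega)]
        rw [felineRound_small k hd (q :: t) (by simp at hlen ⊢; omega)
          (fun p hp => hlive p (by simp [List.mem_cons] at hp ⊢; tauto))]
        simpa using felineRun_single k f hd
  | succ b ih =>
    intro a fuel s ha1 ha2 hlen hfuel hlive
    set m := a * (k + 1) ^ b with hm
    have hm1 : 1 ≤ m := Nat.mul_pos ha1 (pow_pos (by omega) b)
    have hlen' : s.length = m * (k + 1) := by rw [hlen, hm]; ring
    have h2m : m * 2 ≤ m * (k + 1) := Nat.mul_le_mul_left m (by omega)
    rw [passA k hk m s fuel (by omega) (by omega) hlive]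
    rw [List.drop_eq_nil_of_le (by omega), List.nil_append]
    set P := (List.range m).map (fun i => s.getD (i * (k + 1)) (0, 0)) with hP
    have hPlen : P.length = m := by simp [hP]
    rw [ih a (fuel - m) P ha1 ha2 (by rw [hPlen]) (by omega)
      (by intro p hp
          simp only [hP, List.mem_map, List.mem_range] at hp
          obtain ⟨i, _, rfl⟩ := hp
          exact getD_live s hlive _)]
    obtain ⟨m', hm'⟩ : ∃ m', m = m' + 1 := ⟨m - 1, by omega⟩
    rw [hP, hm', List.range_succ_eq_map]
    cases s with
    | nil => simp at hlen'; omega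
    | cons hd rest => simp

theorem chainsaw_pure_power' (a k b : ℕ) (hk : 1 ≤ k) (ha1 : 1 ≤ a) (ha2 : a ≤ k) :
    felineRun k (a * (k + 1) ^ b * 1 + 1)
      ((List.range (a * (k + 1) ^ b)).map (fun i => (i, 1))) = 0 := by
  set n := a * (k + 1) ^ b with hn
  have hn1 : 1 ≤ n := Nat.mul_pos ha1 (pow_pos (by omega) b)
  rw [mainLemma k hk b a (n * 1 + 1) _ ha1 ha2 (by simp [hn]) (by simp)
    (by intro p hp; simp at hp; obtain ⟨i, _, rfl⟩ := hp; simp)]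
  obtain ⟨n', hn'⟩ : ∃ n', n = n' + 1 := ⟨n - 1, by omega⟩
  rw [hn', List.range_succ_eq_map]
  simp

/-- If `n = a(k+1)^b` with `1 ≤ a ≤ k`, soldier 0 survives the Texas Chainsaw
Josephus game. -/
theorem chainsaw_pure_power (a k b : ℕ) (hk : 1 ≤ k) (ha1 : 1 ≤ a) (ha2 : a ≤ k) :
    chainsawT (a * (k + 1) ^ b) k = 0 := by
  rw [chainsawT, felineT]
  exact chainsaw_pure_power' a k b hk ha1 ha2
end

section
/- The Texas Chainsaw Josephus survivor satisfies the recurrence: for n > k, if T(n-k, k) = x under the relabeling in which soldier k+1 becomes soldier 0 (i.e., labels are shifted cyclically back by k+1 after the first elimination round), then T(n,k) = (x + k + 1) mod n. Equivalently, T(n,k) ≡ T(n-k,k) + k + 1 (mod n) for n > k. -/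
namespace ChAux

def lift (f : ℕ → ℕ) : ℕ × ℕ → ℕ × ℕ := fun p => (f p.1, p.2)

lemma skipOne_map (f : ℕ → ℕ) (s : List (ℕ × ℕ)) :
    skipOne (s.map (lift f)) = (skipOne s).map (lift f) := by
  cases s <;> simp [skipOne]

lemma hitOne_map (f : ℕ → ℕ) (s : List (ℕ × ℕ)) :
    hitOne (s.map (lift f)) = (hitOne s).map (lift f) := by
  match s with
  | [] => rfl
  | [p] => rfl
  | (x, l) :: q :: rest =>
    simp only [List.map_cons, hitOne, lift]
    split <;> simp [lift]

lemma hitOne_iter_map (f : ℕ → ℕ) (k : ℕ) (s : List (ℕ × ℕ)) :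
    hitOne^[k] (s.map (lift f)) = (hitOne^[k] s).map (lift f) := by
  induction k generalizing s with
  | zero => rfl
  | succ k ih =>
    rw [Function.iterate_succ_apply, Function.iterate_succ_apply, hitOne_map, ih]

lemma hitOne_ne_nil {s : List (ℕ × ℕ)} (hs : s ≠ []) : hitOne s ≠ [] := by
  match s with
  | [p] => simp [hitOne]
  | (x, l) :: q :: rest =>
    simp only [hitOne]
    split <;> simp

lemma hitOne_iter_ne_nil {s : List (ℕ × ℕ)} (k : ℕ) (hs : s ≠ []) : hitOne^[k] s ≠ [] := by
  induction k generalizing s with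
  | zero => exact hs
  | succ k ih => rw [Function.iterate_succ_apply]; exact ih (hitOne_ne_nil hs)

lemma skipOne_ne_nil {s : List (ℕ × ℕ)} (hs : s ≠ []) : skipOne s ≠ [] := by
  cases s with
  | nil => exact absurd rfl hs
  | cons p rest => simp [skipOne]

lemma felineRound_ne_nil {s : List (ℕ × ℕ)} (k : ℕ) (hs : s ≠ []) : felineRound k s ≠ [] :=
  hitOne_iter_ne_nil k (skipOne_ne_nil hs)

lemma felineRound_map (f : ℕ → ℕ) (k : ℕ) (s : List (ℕ × ℕ)) :
    felineRound k (s.map (lift f)) = (felineRound k s).map (lift f) := by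
  rw [felineRound, felineRound, skipOne_map, hitOne_iter_map]

lemma felineRun_map (f : ℕ → ℕ) (k : ℕ) :
    ∀ fuel (s : List (ℕ × ℕ)), s ≠ [] →
      felineRun k fuel (s.map (lift f)) = f (felineRun k fuel s) := by
  intro fuel
  induction fuel with
  | zero =>
    intro s hs
    cases s with
    | nil => exact absurd rfl hs
    | cons p rest => simp [felineRun, lift]
  | succ fuel ih =>
    intro s hs
    rw [felineRun, felineRun]
    simp only [List.length_map]
    split
    · cases s with
      | nil => exact absurd rfl hs
      | cons p rest => simp [lift]
    · rw [felineRound_map, ih _ (felineRound_ne_nil k hs)]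

/-- invariant: all lives are 1 -/
def Ones (s : List (ℕ × ℕ)) : Prop := ∀ p ∈ s, (p : ℕ × ℕ).2 = 1

lemma skipOne_ones {s : List (ℕ × ℕ)} (hs : Ones s) : Ones (skipOne s) := by
  cases s with
  | nil => exact hs
  | cons p rest =>
    intro q hq
    simp only [skipOne, List.mem_append, List.mem_singleton] at hq
    rcases hq with hq | hq
    · exact hs q (List.mem_cons_of_mem _ hq)
    · subst hq; exact hs q (List.mem_cons_self)
  -- fallback handled below

lemma skipOne_length (s : List (ℕ × ℕ)) : (skipOne s).length = s.length := by
  cases s <;> simp [skipOne]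

lemma hitOne_eq_tail {s : List (ℕ × ℕ)} (hs : Ones s) (h2 : 2 ≤ s.length) :
    hitOne s = s.tail := by
  match s with
  | (x, l) :: q :: rest =>
    have : l = 1 := hs (x, l) (List.mem_cons_self)
    simp [hitOne, this]

lemma hitOne_ones {s : List (ℕ × ℕ)} (hs : Ones s) : Ones (hitOne s) := by
  match s with
  | [] => exact hs
  | [p] => exact hs
  | (x, l) :: q :: rest =>
    have hl : l = 1 := hs (x, l) (List.mem_cons_self)
    intro r hr
    rw [hitOne_eq_tail hs (by simp)] at hr
    exact hs r (List.mem_cons_of_mem _ hr)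

lemma hitOne_iter_ones {s : List (ℕ × ℕ)} (hs : Ones s) (k : ℕ) : Ones (hitOne^[k] s) := by
  induction k generalizing s with
  | zero => exact hs
  | succ k ih => rw [Function.iterate_succ_apply]; exact ih (hitOne_ones hs)

lemma hitOne_length_le (s : List (ℕ × ℕ)) : (hitOne s).length ≤ s.length := by
  match s with
  | [] => simp [hitOne]
  | [p] => simp [hitOne]
  | (x, l) :: q :: rest =>
    simp only [hitOne]
    split <;> simp

lemma hitOne_iter_length_le (k : ℕ) (s : List (ℕ × ℕ)) :
    (hitOne^[k] s).length ≤ s.length := by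
  induction k generalizing s with
  | zero => exact le_rfl
  | succ k ih =>
    rw [Function.iterate_succ_apply]
    exact (ih _).trans (hitOne_length_le s)

lemma felineRound_ones {s : List (ℕ × ℕ)} (hs : Ones s) (k : ℕ) : Ones (felineRound k s) :=
  hitOne_iter_ones (skipOne_ones hs) k

lemma felineRound_length {s : List (ℕ × ℕ)} (hs : Ones s) {k : ℕ} (hk : 1 ≤ k)
    (h2 : 2 ≤ s.length) : (felineRound k s).length ≤ s.length - 1 := by
  obtain ⟨k, rfl⟩ := Nat.exists_eq_add_of_le hk
  have hlen : (skipOne s).length = s.length := skipOne_length s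
  have h2' : 2 ≤ (skipOne s).length := hlen ▸ h2
  rw [felineRound, show 1 + k = k + 1 by omega, Function.iterate_add_apply,
    Function.iterate_one,
    hitOne_eq_tail (skipOne_ones hs) h2']
  have := hitOne_iter_length_le k (skipOne s).tail
  simp only [List.length_tail] at this
  omega

lemma felineRun_fuel_succ {k : ℕ} (hk : 1 ≤ k) :
    ∀ fuel (s : List (ℕ × ℕ)), Ones s → s.length ≤ fuel + 1 →
      felineRun k (fuel + 1) s = felineRun k fuel s := by
  intro fuel
  induction fuel with
  | zero =>
    intro s hs hlen
    have h1 : s.length ≤ 1 := hlen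
    show (if s.length ≤ 1 then (s.headD (0, 0)).1 else felineRun k 0 (felineRound k s)) = _
    rw [if_pos h1]
    rfl
  | succ fuel ih =>
    intro s hs hlen
    by_cases h1 : s.length ≤ 1
    · rw [felineRun, if_pos h1, felineRun, if_pos h1]
    · rw [felineRun, if_neg h1]
      conv_rhs => rw [felineRun, if_neg h1]
      have h2 : 2 ≤ s.length := by omega
      have := felineRound_length hs hk h2
      exact ih _ (felineRound_ones hs k) (by omega)

lemma felineRun_fuel_add {k : ℕ} (hk : 1 ≤ k) (m : ℕ) :
    ∀ fuel (s : List (ℕ × ℕ)), Ones s → s.length ≤ fuel + 1 →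
      felineRun k (fuel + m) s = felineRun k fuel s := by
  induction m with
  | zero => intro fuel s _ _; rfl
  | succ m ih =>
    intro fuel s hs hlen
    have : fuel + (m + 1) = (fuel + m) + 1 := by omega
    rw [this, felineRun_fuel_succ hk (fuel + m) s hs (by omega), ih fuel s hs hlen]

lemma hitOne_iter_drop {s : List (ℕ × ℕ)} (hs : Ones s) :
    ∀ k, k + 1 ≤ s.length → hitOne^[k] s = s.drop k := by
  intro k
  induction k generalizing s with
  | zero => intro _; simp
  | succ k ih =>
    intro hlen
    rw [Function.iterate_succ_apply, hitOne_eq_tail hs (by omega)]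
    have h1 : Ones s.tail := by
      intro p hp
      exact hs p (List.mem_of_mem_tail hp)
    rw [ih h1 (by simp [List.length_tail]; omega)]
    rw [← List.drop_one, List.drop_drop]
    congr 1
    omega

lemma round_init (n k : ℕ) (hk : 1 ≤ k) (h : k < n) :
    felineRound k ((List.range n).map (fun i => (i, 1))) =
      ((List.range (n - k)).map (fun j => (j, 1))).map (lift (fun x => (x + k + 1) % n)) := by
  obtain ⟨m, rfl⟩ : ∃ m, n = m + 1 := ⟨n - 1, by omega⟩
  have hkm : k ≤ m := by omega
  have hones : Ones (skipOne ((List.range (m + 1)).map (fun i => (i, 1)))) := by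
    apply skipOne_ones
    intro p hp
    simp only [List.mem_map] at hp
    obtain ⟨i, _, rfl⟩ := hp
    rfl
  rw [felineRound, hitOne_iter_drop hones k]
  swap
  · rw [skipOne_length]
    simp
    omega
  have hskip : skipOne ((List.range (m + 1)).map (fun i => (i, 1))) =
      (List.range m).map (fun i => (i + 1, 1)) ++ [(0, 1)] := by
    rw [List.range_succ_eq_map]
    simp [skipOne, Function.comp]
  rw [hskip, List.drop_append_of_le_length (by simp [hkm])]
  apply List.ext_getElem
  · simp
    omega
  · intro i h1 h2
    simp only [List.length_append, List.length_map, List.length_drop, List.length_range,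
      List.length_singleton] at h1
    rw [List.getElem_append]
    split
    · rename_i hi
      simp only [List.length_map, List.length_drop, List.length_range] at hi
      simp only [List.getElem_drop, List.getElem_map, List.getElem_range, lift]
      rw [Nat.mod_eq_of_lt (by omega : i + k + 1 < m + 1),
        show i + k + 1 = k + i + 1 by omega]
    · rename_i hi
      simp only [List.length_map, List.length_drop, List.length_range] at hi
      have hieq : i = m - k := by omega
      simp only [List.getElem_singleton, List.getElem_map, List.getElem_range, lift]
      subst hieq
      have : m - k + k + 1 = m + 1 := by omega
      rw [this, Nat.mod_self]

end ChAux

/-- The recurrence for the Texas Chainsaw Josephus survivor: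
`T(n,k) ≡ T(n-k,k) + k + 1 (mod n)` for `n > k`. -/
theorem chainsaw_recurrence (n k : ℕ) (hk : 1 ≤ k) (h : k < n) :
    chainsawT n k % n = (chainsawT (n - k) k + k + 1) % n := by
  have h2 : ¬ ((List.range n).map (fun i => ((i : ℕ), (1 : ℕ)))).length ≤ 1 := by
    simp; omega
  have honesInit : ∀ m, ChAux.Ones ((List.range m).map (fun i => (i, 1))) := by
    intro m p hp
    simp only [List.mem_map] at hp
    obtain ⟨i, _, rfl⟩ := hp
    rfl
  have step : chainsawT n k =
      felineRun k n (felineRound k ((List.range n).map (fun i => (i, 1)))) := by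
    rw [chainsawT, felineT, mul_one, felineRun, if_neg h2]
  rw [step, ChAux.round_init n k hk h,
    ChAux.felineRun_map _ k n _ (by simp; omega)]
  have hfuel : felineRun k n ((List.range (n - k)).map (fun j => (j, 1))) =
      chainsawT (n - k) k := by
    rw [chainsawT, felineT, mul_one]
    have hn : n = (n - k + 1) + (k - 1) := by omega
    conv_lhs => rw [hn]
    rw [ChAux.felineRun_fuel_add hk (k - 1) (n - k + 1) _ (honesInit _)
      (by simp only [List.length_map, List.length_range]; omega)]
    rw [show n - k + 1 + (k - 1) - k = n - k by omega]
  rw [hfuel]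
  simp [Nat.mod_mod]
end

section
/- In the Texas Chainsaw Josephus game with n soldiers and parameter k, where each elimination round takes k+1 seconds (one second per soldier skipped or eliminated), if a soldier's label x satisfies x = (k+1)m + s with 1 ≤ s ≤ k, then that soldier is eliminated after exactly x - m seconds. -/
def sim (k : ℕ) : ℕ → List ℕ → List ℕ × ℕ × List ℕ
  | c, [] => ([], c, [])
  | 0, a :: t => ((sim k k t).1, (sim k k t).2.1, a :: (sim k k t).2.2)
  | c+1, a :: t => (a :: (sim k c t).1, (sim k c t).2.1, (sim k c t).2.2)

def cnt (k : ℕ) : ℕ → ℕ → ℕ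
  | _, 0 => 0
  | 0, j+1 => cnt k k j
  | c+1, j+1 => 1 + cnt k c j

def fcn (k : ℕ) : ℕ → ℕ → ℕ
  | c, 0 => c
  | 0, j+1 => fcn k k j
  | c+1, j+1 => fcn k c j

lemma elimSteps_cons_cons (k fuel c : ℕ) (a y : ℕ) (l : List ℕ) :
    elimSteps k (fuel+1) c (a :: y :: l) =
      if c = 0 then elimSteps k fuel k ((y :: l) ++ [a])
      else a :: elimSteps k fuel (c - 1) (y :: l) := rfl

lemma sim_len (k : ℕ) : ∀ (l : List ℕ) (c : ℕ), (sim k c l).1.length = cnt k c l.length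
  | [], c => by cases c <;> simp [sim, cnt]
  | a :: t, 0 => by simp [sim, cnt, sim_len k t k]
  | a :: t, c+1 => by simp [sim, cnt, sim_len k t c]; omega

lemma sim_fc (k : ℕ) : ∀ (l : List ℕ) (c : ℕ), (sim k c l).2.1 = fcn k c l.length
  | [], c => by cases c <;> simp [sim, fcn]
  | a :: t, 0 => by simp [sim, fcn, sim_fc k t k]
  | a :: t, c+1 => by simp [sim, fcn, sim_fc k t c]

lemma sim_subset (k : ℕ) : ∀ (l : List ℕ) (c : ℕ), ∀ z ∈ (sim k c l).1, z ∈ l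
  | [], c => by cases c <;> simp [sim]
  | a :: t, 0 => by
      intro z hz
      simp only [sim] at hz
      exact List.mem_cons_of_mem a (sim_subset k t k z hz)
  | a :: t, c+1 => by
      intro z hz
      simp only [sim, List.mem_cons] at hz
      rcases hz with h | h
      · simp [h]
      · exact List.mem_cons_of_mem a (sim_subset k t c z h)

lemma sim_skip_ne (k : ℕ) (a : ℕ) (t : List ℕ) : (sim k 0 (a :: t)).2.2 ≠ [] := by
  simp [sim]

lemma elimSteps_sim (k : ℕ) : ∀ (front : List ℕ) (c fuel b : ℕ) (back : List ℕ),
    front.length ≤ fuel →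
    elimSteps k fuel c (front ++ b :: back) =
      (sim k c front).1 ++
        elimSteps k (fuel - front.length) (sim k c front).2.1
          (b :: (back ++ (sim k c front).2.2))
  | [], c, fuel, b, back, _ => by simp [sim]
  | a :: t, c, fuel, b, back, hf => by
      obtain ⟨f, rfl⟩ : ∃ f, fuel = f + 1 := by
        have h1 : 1 ≤ fuel := le_trans (by simp) hf
        exact ⟨fuel - 1, by omega⟩
      obtain ⟨y, l, hyl⟩ : ∃ y l, t ++ b :: back = y :: l := by
        cases t with
        | nil => exact ⟨b, back, rfl⟩
        | cons u v => exact ⟨u, v ++ b :: back, by simp⟩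
      have hlen : t.length ≤ f := by simpa using hf
      cases c with
      | zero =>
          have IH := elimSteps_sim k t k f b (back ++ [a]) hlen
          rw [show (a :: t) ++ b :: back = a :: y :: l by simp [hyl],
            elimSteps_cons_cons, if_pos rfl, ← hyl]
          simp only [sim, List.length_cons, List.append_assoc, List.cons_append,
            List.singleton_append, Nat.succ_sub_succ] at IH ⊢
          exact IH
      | succ c' =>
          rw [show (a :: t) ++ b :: back = a :: y :: l by simp [hyl],
            elimSteps_cons_cons, if_neg (Nat.succ_ne_zero c'), ← hyl,
            Nat.add_sub_cancel, elimSteps_sim k t c' f b back hlen]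
          simp [sim, Nat.succ_sub_succ]

lemma cnt_shift (k : ℕ) : ∀ (a c j : ℕ), cnt k (a + c) (a + j) = a + cnt k c j
  | 0, c, j => by simp
  | a+1, c, j => by
      rw [show a + 1 + c = (a + c) + 1 from by omega,
        show a + 1 + j = (a + j) + 1 from by omega]
      show 1 + cnt k (a + c) (a + j) = a + 1 + cnt k c j
      rw [cnt_shift k a c j]; omega

lemma fcn_shift (k : ℕ) : ∀ (a c j : ℕ), fcn k (a + c) (a + j) = fcn k c j
  | 0, c, j => by simp
  | a+1, c, j => by
      rw [show a + 1 + c = (a + c) + 1 from by omega,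
        show a + 1 + j = (a + j) + 1 from by omega]
      show fcn k (a + c) (a + j) = fcn k c j
      exact fcn_shift k a c j

lemma cnt_key (k : ℕ) (hk : 1 ≤ k) (s : ℕ) (hs1 : 1 ≤ s) (hs2 : s ≤ k) :
    ∀ m : ℕ, cnt k 0 ((k+1)*m + s) + (m+1) = (k+1)*m + s
  | 0 => by
      obtain ⟨s', rfl⟩ : ∃ s', s = s' + 1 := ⟨s - 1, by omega⟩
      have h1 : cnt k 0 ((k+1)*0 + (s'+1)) = cnt k k s' := by norm_num; rfl
      have h2 : cnt k k s' = s' + cnt k (k - s') 0 := by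
        have := cnt_shift k s' (k - s') 0
        rwa [show s' + (k - s') = k from by omega, Nat.add_zero] at this
      have h3 : cnt k (k - s') 0 = 0 := by rcases (k - s') with _ | c <;> rfl
      rw [h1, h2, h3]; ring
  | m+1 => by
      have h1 : cnt k 0 ((k+1)*(m+1) + s) = cnt k k (k + ((k+1)*m + s)) := by
        rw [show (k+1)*(m+1) + s = ((k + ((k+1)*m + s))) + 1 from by ring]; rfl
      have h2 : cnt k k (k + ((k+1)*m + s)) = k + cnt k 0 ((k+1)*m + s) := by
        have := cnt_shift k k 0 ((k+1)*m + s); simpa using this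
      have h3 := cnt_key k hk s hs1 hs2 m
      have h4 : (k+1)*(m+1) = (k+1)*m + (k+1) := by ring
      rw [h1, h2]; omega

lemma fcn_key (k : ℕ) (hk : 1 ≤ k) (s : ℕ) (hs1 : 1 ≤ s) (hs2 : s ≤ k) :
    ∀ m : ℕ, fcn k 0 ((k+1)*m + s) = k + 1 - s
  | 0 => by
      obtain ⟨s', rfl⟩ : ∃ s', s = s' + 1 := ⟨s - 1, by omega⟩
      have h1 : fcn k 0 ((k+1)*0 + (s'+1)) = fcn k k s' := by norm_num; rfl
      have h2 : fcn k k s' = fcn k (k - s') 0 := by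
        have := fcn_shift k s' (k - s') 0
        rwa [show s' + (k - s') = k from by omega, Nat.add_zero] at this
      have h3 : fcn k (k - s') 0 = k - s' := by rcases (k - s') with _ | c <;> rfl
      rw [h1, h2, h3]; omega
  | m+1 => by
      have h1 : fcn k 0 ((k+1)*(m+1) + s) = fcn k k (k + ((k+1)*m + s)) := by
        rw [show (k+1)*(m+1) + s = ((k + ((k+1)*m + s))) + 1 from by ring]; rfl
      have h2 : fcn k k (k + ((k+1)*m + s)) = fcn k 0 ((k+1)*m + s) := by
        have := fcn_shift k k 0 ((k+1)*m + s); simpa using this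
      rw [h1, h2]; exact fcn_key k hk s hs1 hs2 m

/-- If `x = (k+1)m + s` with `1 ≤ s ≤ k`, then soldier `x` is eliminated after
exactly `x - m` seconds in the Texas Chainsaw Josephus game. -/
theorem chainsaw_elim_time_nonmultiple (n k x m s : ℕ)
    (hk : 1 ≤ k) (hn : 1 ≤ n) (hxn : x < n)
    (hx : x = (k + 1) * m + s) (hs1 : 1 ≤ s) (hs2 : s ≤ k) :
    elimTime n k x = x - m := by
  have hx1 : 1 ≤ x := by omega
  set F := (k + 2) * (n + 1) * (n + 1) with hF
  have hFx : x + 1 ≤ F := by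
    have h1 : 1 * (n + 1) ≤ ((k + 2) * (n + 1)) * (n + 1) :=
      Nat.mul_le_mul_right (n + 1) (Nat.succ_le_of_lt (by positivity))
    rw [one_mul] at h1
    omega
  -- split range n
  obtain ⟨T, hT⟩ : ∃ T, List.range n = List.range x ++ x :: T := by
    obtain ⟨j, hj⟩ : ∃ j, n = x + (j + 1) := ⟨n - x - 1, by omega⟩
    refine ⟨((List.range j).map Nat.succ).map (x + ·), ?_⟩
    rw [hj, List.range_add, List.range_succ_eq_map]
    simp
  have hsim := elimSteps_sim k (List.range x) 0 F x T (by simpa using by omega)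
  have hO : elimOrder n k =
      (sim k 0 (List.range x)).1 ++
        elimSteps k (F - x) (sim k 0 (List.range x)).2.1
          (x :: (T ++ (sim k 0 (List.range x)).2.2)) := by
    rw [elimOrder, hT, hsim]; simp
  -- the counter when reaching x is nonzero
  have hc : (sim k 0 (List.range x)).2.1 = k + 1 - s := by
    rw [sim_fc, List.length_range, hx, fcn_key k hk s hs1 hs2 m]
  -- skipped list nonempty
  obtain ⟨x', rfl⟩ : ∃ x', x = x' + 1 := ⟨x - 1, by omega⟩
  have hsk : (sim k 0 (List.range (x' + 1))).2.2 ≠ [] := by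
    rw [List.range_succ_eq_map]
    exact sim_skip_ne k 0 _
  set x := x' + 1
  obtain ⟨y, l, hyl⟩ : ∃ y l, T ++ (sim k 0 (List.range x)).2.2 = y :: l := by
    cases T with
    | nil =>
        cases h : (sim k 0 (List.range x)).2.2 with
        | nil => exact absurd h hsk
        | cons y l => exact ⟨y, l, by simp [h]⟩
    | cons u v => exact ⟨u, v ++ (sim k 0 (List.range x)).2.2, rfl⟩
  obtain ⟨f, hf⟩ : ∃ f, F - x = f + 1 := ⟨F - x - 1, by omega⟩
  have hstep : elimSteps k (F - x) (sim k 0 (List.range x)).2.1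
      (x :: (T ++ (sim k 0 (List.range x)).2.2)) =
      x :: elimSteps k f ((k + 1 - s) - 1) (y :: l) := by
    rw [hyl, hf, hc, elimSteps_cons_cons, if_neg (by omega)]
  have hxO : x ∉ (sim k 0 (List.range x)).1 := fun h => by
    have := sim_subset k (List.range x) 0 x h
    simp at this
  rw [elimTime, hO, hstep, List.idxOf_append_of_notMem hxO,
    List.idxOf_cons_self, sim_len, List.length_range]
  have h5 := cnt_key k hk s hs1 hs2 m
  have h6 : cnt k 0 x = cnt k 0 ((k + 1) * m + s) := by rw [hx]
  omega
end

section
/- In the Texas Chainsaw Josephus game with n soldiers and parameter k, suppose a soldier's label is x = (k+1)m. Write n - km = a(k+1)^b with a not divisible by k+1 (this a and b exist uniquely), and write a = (k+1)q + r with 0 < r < k+1. Then soldier x is eliminated after exactly n - q seconds. -/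
namespace ChainsawAux

lemma elimSteps_nil (k fuel c : ℕ) : elimSteps k fuel c [] = [] := by cases fuel <;> rfl

lemma elimSteps_singleton (k fuel c x : ℕ) : elimSteps k fuel c [x] = [x] := by
  cases fuel <;> rfl

lemma elimSteps_cons₂ (k fuel c a b : ℕ) (l : List ℕ) :
    elimSteps k (fuel+1) c (a :: b :: l) =
      if c = 0 then elimSteps k fuel k ((b :: l) ++ [a])
      else a :: elimSteps k fuel (c - 1) (b :: l) := rfl

lemma elimSteps_skip (k fuel a : ℕ) (rest : List ℕ) (h : rest ≠ []) :
    elimSteps k (fuel+1) 0 (a :: rest) = elimSteps k fuel k (rest ++ [a]) := by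
  cases rest with
  | nil => exact absurd rfl h
  | cons b l => rw [elimSteps_cons₂]; simp

lemma elimSteps_kill (k fuel c a : ℕ) (rest : List ℕ) (h : rest ≠ []) (hc : c ≠ 0) :
    elimSteps k (fuel+1) c (a :: rest) = a :: elimSteps k fuel (c-1) rest := by
  cases rest with
  | nil => exact absurd rfl h
  | cons b l => rw [elimSteps_cons₂]; simp [hc]

lemma kill_block (k : ℕ) : ∀ (t u : List ℕ) (c fuel : ℕ),
    t.length ≤ c → u ≠ [] →
    elimSteps k (fuel + t.length) c (t ++ u) = t ++ elimSteps k fuel (c - t.length) u := by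
  intro t
  induction t with
  | nil => intro u c fuel _ _; simp
  | cons a t ih =>
    intro u c fuel hc hu
    have h1 : t ++ u ≠ [] := fun h => hu (List.append_eq_nil_iff.mp h).2
    simp only [List.length_cons] at hc ⊢
    rw [show fuel + (t.length + 1) = (fuel + t.length) + 1 by ring]
    rw [List.cons_append, elimSteps_kill k _ c a (t ++ u) h1 (by omega)]
    rw [ih u (c-1) fuel (by omega) hu, show c - 1 - t.length = c - (t.length + 1) by omega]
    rfl

lemma round (k : ℕ) (hk : 1 ≤ k) (x : ℕ) (t u : List ℕ) (fuel : ℕ) (ht : t.length = k) :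
    elimSteps k (fuel + (k+1)) 0 (x :: (t ++ u)) = t ++ elimSteps k fuel 0 (u ++ [x]) := by
  have htne : t ≠ [] := by intro h; rw [h] at ht; simp at ht; omega
  have h1 : t ++ u ≠ [] := fun h => htne (List.append_eq_nil_iff.mp h).1
  rw [show fuel + (k+1) = (fuel + k) + 1 by ring]
  rw [elimSteps_skip k _ x _ h1, List.append_assoc]
  have := kill_block k t (u ++ [x]) k fuel (by omega) (by simp)
  rw [ht] at this
  rw [this]
  simp

def skippedL (k : ℕ) : ℕ → List ℕ → List ℕ
  | 0, _ => []
  | j+1, s => s.headD 0 :: skippedL k j (s.drop (k+1))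

def killedL (k : ℕ) : ℕ → List ℕ → List ℕ
  | 0, _ => []
  | j+1, s => (s.drop 1).take k ++ killedL k j (s.drop (k+1))

lemma skippedL_length (k : ℕ) : ∀ (j : ℕ) (s : List ℕ), (skippedL k j s).length = j := by
  intro j
  induction j with
  | zero => intro s; rfl
  | succ j ih => intro s; simp [skippedL, ih]

lemma skippedL_append (k : ℕ) : ∀ (j : ℕ) (l r : List ℕ), (k+1)*j ≤ l.length →
    skippedL k j (l ++ r) = skippedL k j l := by
  intro j
  induction j with
  | zero => intro l r _; rfl
  | succ j ih =>
    intro l r h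
    rw [Nat.mul_succ] at h
    cases l with
    | nil => simp at h
    | cons a l' =>
      simp only [List.length_cons] at h
      simp only [skippedL, List.cons_append, List.headD_cons, List.drop_succ_cons]
      congr 1
      rw [List.drop_append_of_le_length (show k ≤ l'.length by omega),
        ih _ _ (by simp only [List.length_drop]; omega)]

lemma killedL_append (k : ℕ) : ∀ (j : ℕ) (l r : List ℕ), (k+1)*j ≤ l.length →
    killedL k j (l ++ r) = killedL k j l := by
  intro j
  induction j with
  | zero => intro l r _; rfl
  | succ j ih =>
    intro l r h
    rw [Nat.mul_succ] at h
    simp only [killedL]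
    have h1 : 1 ≤ l.length := by omega
    rw [List.drop_append_of_le_length h1,
      List.take_append_of_le_length (by simp only [List.length_drop]; omega),
      List.drop_append_of_le_length (by omega),
      ih _ _ (by simp only [List.length_drop]; omega)]

lemma killedL_length (k : ℕ) : ∀ (j : ℕ) (s : List ℕ), (k+1)*j ≤ s.length →
    (killedL k j s).length = k * j := by
  intro j
  induction j with
  | zero => intro s _; rfl
  | succ j ih =>
    intro s h
    rw [Nat.mul_succ] at h
    simp only [killedL, List.length_append, List.length_take, List.length_drop]
    rw [ih _ (by simp only [List.length_drop]; omega)]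
    rw [Nat.mul_succ]
    omega

lemma killed_skipped_perm (k : ℕ) : ∀ (j : ℕ) (s : List ℕ), (k+1)*j ≤ s.length →
    (↑(killedL k j s) + ↑(skippedL k j s) : Multiset ℕ) = ↑(s.take ((k+1)*j)) := by
  intro j
  induction j with
  | zero => intro s _; rfl
  | succ j ih =>
    intro s h
    rw [Nat.mul_succ] at h
    cases s with
    | nil => simp at h
    | cons a s' =>
      simp only [List.length_cons] at h
      rw [Nat.mul_succ, Nat.add_comm ((k+1)*j) (k+1), List.take_add]
      have hdrop : (a :: s').drop (k+1) = s'.drop k := by simp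
      have htake : (a :: s').take (k+1) = a :: s'.take k := by simp [List.take_succ_cons]
      simp only [killedL, skippedL, hdrop, htake, List.headD_cons, List.drop_one,
        List.tail_cons, List.cons_append]
      have := ih (s'.drop k) (by simp only [List.length_drop]; omega)
      have e1 : ∀ (x : ℕ) (l : List ℕ), ((x :: l : List ℕ) : Multiset ℕ) = ↑([x] ++ l) :=
        fun _ _ => rfl
      rw [e1 a (s'.take k ++ (s'.drop k).take ((k+1)*j)), e1 a (skippedL k j (s'.drop k))]
      push_cast [← Multiset.coe_add] at this ⊢
      rw [← this]
      ac_rfl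

lemma rounds (k : ℕ) (hk : 1 ≤ k) : ∀ (j : ℕ) (s : List ℕ) (fuel : ℕ),
    (k+1)*j ≤ s.length →
    elimSteps k (fuel + (k+1)*j) 0 s =
      killedL k j s ++ elimSteps k fuel 0 (s.drop ((k+1)*j) ++ skippedL k j s) := by
  intro j
  induction j with
  | zero => intro s fuel _; simp [skippedL, killedL]
  | succ j ih =>
    intro s fuel h
    rw [Nat.mul_succ] at h ⊢
    cases s with
    | nil => simp at h
    | cons x s' =>
      simp only [List.length_cons] at h
      have hs' : k + (k+1)*j ≤ s'.length := by omega
      have hsplit : s' = s'.take k ++ s'.drop k := (List.take_append_drop k s').symm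
      have ht : (s'.take k).length = k := by simp only [List.length_take]; omega
      have hulen : (k+1)*j ≤ (s'.drop k).length := by simp only [List.length_drop]; omega
      conv_lhs => rw [hsplit]
      rw [show fuel + ((k+1)*j + (k+1)) = (fuel + (k+1)*j) + (k+1) by ring]
      rw [round k hk x (s'.take k) (s'.drop k) _ ht]
      rw [ih (s'.drop k ++ [x]) fuel (by simp only [List.length_append, List.length_drop, List.length_cons, List.length_nil]; omega)]
      rw [killedL_append k j _ [x] hulen, skippedL_append k j _ [x] hulen]
      rw [List.drop_append_of_le_length hulen]
      have hkill : killedL k (j+1) (x :: s') = s'.take k ++ killedL k j (s'.drop k) := by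
        simp [killedL]
      have hskip : skippedL k (j+1) (x :: s') = x :: skippedL k j (s'.drop k) := by
        simp [skippedL]
      have hdrop2 : (x :: s').drop ((k+1)*j + (k+1)) = (s'.drop k).drop ((k+1)*j) := by
        rw [List.drop_drop]
        rw [show (k+1)*j + (k+1) = ((k+1)*j + k) + 1 by ring]
        simp [List.drop_drop]
        congr 1
        omega
      rw [hkill, hskip, hdrop2]
      simp

lemma term (k : ℕ) (hk : 1 ≤ k) : ∀ (fuel c : ℕ) (s : List ℕ),
    2 * s.length ≤ fuel + (if c = 0 then 0 else 1) →
    (↑(elimSteps k fuel c s) : Multiset ℕ) = ↑s := by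
  intro fuel
  induction fuel with
  | zero =>
    intro c s h
    rfl
  | succ fuel ih =>
    intro c s h
    match s with
    | [] => rw [elimSteps_nil]
    | [x] => rw [elimSteps_singleton]
    | a :: b :: l =>
      by_cases hc : c = 0
      · subst hc
        rw [elimSteps_skip k fuel a (b :: l) (by simp)]
        rw [ih k _ (by have hk0 : ¬ (k = 0) := by omega
                       simp [hk0] at h ⊢
                       omega)]
        rw [show ((a :: b :: l : List ℕ) : Multiset ℕ) = ↑([a] ++ (b :: l)) from rfl]
        push_cast [← Multiset.coe_add]
        exact add_comm _ _
      · rw [elimSteps_kill k fuel c a (b :: l) (by simp) hc]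
        rw [show ((a :: elimSteps k fuel (c-1) (b :: l) : List ℕ) : Multiset ℕ)
          = ↑([a] ++ elimSteps k fuel (c-1) (b :: l)) from rfl]
        push_cast [← Multiset.coe_add]
        rw [ih (c-1) _ (by simp only [List.length_cons, if_neg hc] at h
                           split_ifs <;> simp only [List.length_cons] <;> omega)]
        rw [show ((a :: b :: l : List ℕ) : Multiset ℕ) = ↑([a] ++ (b :: l)) from rfl]
        push_cast [← Multiset.coe_add]
        rfl

lemma indexOf_concat (x : ℕ) : ∀ (l₁ l₂ : List ℕ), x ∉ l₁ →
    (l₁ ++ x :: l₂).idxOf x = l₁.length := by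
  intro l₁
  induction l₁ with
  | nil => intro l₂ _; simp
  | cons a l ih =>
    intro l₂ h
    simp only [List.mem_cons, not_or] at h
    rw [List.cons_append, List.idxOf_cons_ne _ (fun hax => h.1 hax.symm), ih l₂ h.2]
    simp

lemma G (k : ℕ) (hk : 1 ≤ k) : ∀ N : ℕ, ∀ a b q r : ℕ,
    N = a * (k+1)^b → ¬ (k+1) ∣ a → a = (k+1)*q + r → 0 < r → r < k+1 →
    ∀ (s : List ℕ) (fuel : ℕ), s.length = N → 4 * N ≤ fuel →
    ∃ L R : List ℕ, elimSteps k fuel 0 s = L ++ s.headD 0 :: R ∧ R.length = q ∧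
      (↑(L ++ s.headD 0 :: R) : Multiset ℕ) = ↑s := by
  intro N
  induction N using Nat.strong_induction_on with
  | _ N IH =>
  intro a b q r hd hnd haq hr1 hr2 s fuel hlen hfuel
  have hpow : 0 < (k+1)^b := pow_pos (by omega) b
  have ha0 : a ≠ 0 := fun h => hnd (h ▸ dvd_zero _)
  have hN0 : N ≠ 0 := by
    intro h
    rw [h] at hd
    rcases Nat.mul_eq_zero.mp hd.symm with h' | h'
    · exact ha0 h'
    · omega
  rcases Nat.lt_or_ge N 2 with hN2 | hN2
  · -- N = 1
    have hN1 : N = 1 := by omega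
    have h1 : a * (k+1)^b = 1 := (hN1 ▸ hd).symm
    have ha1 : a = 1 := Nat.eq_one_of_dvd_one ⟨(k+1)^b, h1.symm⟩
    have hq' : q ≤ (k+1)*q := Nat.le_mul_of_pos_left q (by omega)
    have hq : q = 0 := by omega
    obtain ⟨x, rfl⟩ := List.length_eq_one_iff.mp (by omega : s.length = 1)
    exact ⟨[], [], by simp [elimSteps_singleton], by simp [hq], by simp⟩
  cases b with
  | succ b' =>
    have hNt : N = (k+1) * (a * (k+1)^b') := by rw [hd, pow_succ]; ring
    set t := a * (k+1)^b' with hT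
    have ht0 : t ≠ 0 := mul_ne_zero ha0 (pow_ne_zero _ (by omega))
    have htN : t < N := by nlinarith [hNt, Nat.pos_of_ne_zero ht0]
    obtain ⟨f₂, rfl⟩ : ∃ f₂, fuel = f₂ + (k+1)*t := ⟨fuel - (k+1)*t, by omega⟩
    rw [rounds k hk t s f₂ (by omega)]
    have hdropnil : s.drop ((k+1)*t) = [] := by
      rw [List.drop_eq_nil_iff]
      omega
    rw [hdropnil, List.nil_append]
    have hVlen : (skippedL k t s).length = t := skippedL_length k t s
    have hf₂ : 4 * t ≤ f₂ := by
      have h4 : 4 * t ≤ 3 * ((k+1) * t) := by nlinarith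
      omega
    obtain ⟨L, R, hEq, hRlen, hMult⟩ := IH t htN a b' q r hT hnd haq hr1 hr2 _ f₂ hVlen hf₂
    have hhead : (skippedL k t s).headD 0 = s.headD 0 := by
      rcases Nat.exists_eq_succ_of_ne_zero ht0 with ⟨t', ht'⟩
      rw [ht']
      rfl
    rw [hhead] at hEq hMult
    rw [hEq]
    refine ⟨killedL k t s ++ L, R, by rw [List.append_assoc], hRlen, ?_⟩
    have hperm := killed_skipped_perm k t s (by omega)
    have htake : s.take ((k+1)*t) = s := List.take_of_length_le (by omega)
    rw [htake] at hperm
    rw [List.append_assoc]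
    push_cast [← Multiset.coe_add] at hMult ⊢
    rw [hMult]
    exact hperm
  | zero =>
    rw [pow_zero, mul_one] at hd
    subst hd
    by_cases hq0 : q = 0
    · -- a = N = r ≤ k : one skip then all killed
      rw [hq0] at haq
      have hNr : N = r := by simpa using haq
      obtain ⟨a₀, tl, rfl⟩ : ∃ a₀ tl, s = a₀ :: tl := by
        cases s with
        | nil => simp at hlen; omega
        | cons a₀ tl => exact ⟨a₀, tl, rfl⟩
      have htlne : tl ≠ [] := by
        intro h
        rw [h] at hlen
        simp at hlen
        omega
      have htl : tl.length = N - 1 := by simp at hlen; omega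
      obtain ⟨f₂, rfl⟩ : ∃ f₂, fuel = (f₂ + tl.length) + 1 := ⟨fuel - tl.length - 1, by omega⟩
      rw [elimSteps_skip k _ a₀ tl htlne]
      rw [kill_block k tl [a₀] k f₂ (by omega) (by simp)]
      rw [elimSteps_singleton]
      refine ⟨tl, [], rfl, by simp [hq0], ?_⟩
      rw [show ((a₀ :: tl : List ℕ) : Multiset ℕ) = ↑([a₀] ++ tl) from rfl]
      push_cast [← Multiset.coe_add]
      exact add_comm _ _
    · -- q ≥ 1
      have hqN : (k+1)*q + r = N := by omega
      obtain ⟨f₂, rfl⟩ : ∃ f₂, fuel = (((f₂ + 1) + (r-1)) + 1) + (k+1)*q :=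
        ⟨fuel - (k+1)*q - r - 1, by omega⟩
      rw [rounds k hk q s _ (by omega)]
      have hDlen : (s.drop ((k+1)*q)).length = r := by simp; omega
      obtain ⟨d₀, D', hD⟩ := List.exists_cons_of_ne_nil
        (show s.drop ((k+1)*q) ≠ [] by intro h; rw [h] at hDlen; simp at hDlen; omega)
      have hD'len : D'.length = r - 1 := by rw [hD] at hDlen; simp at hDlen; omega
      obtain ⟨q', rfl⟩ := Nat.exists_eq_succ_of_ne_zero hq0
      simp only [Nat.succ_eq_add_one] at *
      have hV : skippedL k (q'+1) s = s.headD 0 :: skippedL k q' (s.drop (k+1)) := rfl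
      set V' := skippedL k q' (s.drop (k+1)) with hV'
      have hV'len : V'.length = q' := skippedL_length k q' _
      rw [hD, hV]
      rw [show (d₀ :: D') ++ (s.headD 0 :: V') = d₀ :: (D' ++ (s.headD 0 :: V')) from rfl]
      rw [elimSteps_skip k _ d₀ _ (by simp)]
      rw [List.append_assoc]
      rw [show (f₂ + 1) + (r-1) = (f₂ + 1) + D'.length by omega]
      rw [kill_block k D' ((s.headD 0 :: V') ++ [d₀]) k (f₂ + 1) (by omega) (by simp)]
      rw [show (s.headD 0 :: V') ++ [d₀] = s.headD 0 :: (V' ++ [d₀]) from rfl]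
      rw [elimSteps_kill k f₂ _ (s.headD 0) (V' ++ [d₀]) (by simp) (by omega)]
      have hqle : q' + 1 ≤ (k+1)*(q'+1) := Nat.le_mul_of_pos_left _ (by omega)
      set W := elimSteps k f₂ (k - D'.length - 1) (V' ++ [d₀]) with hW
      have hWm : (↑W : Multiset ℕ) = ↑(V' ++ [d₀]) := by
        rw [hW]
        apply term k hk
        have h2q : 2 * (V' ++ [d₀]).length ≤ f₂ := by
          simp only [List.length_append, List.length_cons, List.length_nil, hV'len]
          omega
        split_ifs <;> omega
      have hWlen : W.length = q' + 1 := by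
        have := congrArg Multiset.card hWm
        simp only [Multiset.coe_card, List.length_append, List.length_cons,
          List.length_nil, hV'len] at this
        omega
      refine ⟨killedL k (q'+1) s ++ D', W, ?_, hWlen, ?_⟩
      · rw [List.append_assoc]
      · have hperm := killed_skipped_perm k (q'+1) s (by omega)
        rw [hV] at hperm
        have hD2 : s.drop ((k+1)*(q'+1)) = d₀ :: D' := hD
        have hsplit : s = s.take ((k+1)*(q'+1)) ++ s.drop ((k+1)*(q'+1)) :=
          (List.take_append_drop _ s).symm
        conv_rhs => rw [hsplit, hD2]
        simp only [← Multiset.coe_add, ← Multiset.cons_coe, ← Multiset.singleton_add]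
          at hperm hWm ⊢
        rw [hWm, ← hperm]
        ac_rfl

end ChainsawAux

open ChainsawAux in
/-- If `x = (k+1)m`, write `n - km = a(k+1)^b` with `(k+1) ∤ a`, and
`a = (k+1)q + r` with `0 < r < k+1`. Then soldier `x` is eliminated after
exactly `n - q` seconds. -/
theorem chainsaw_elim_time_multiple (n k x m a b q r : ℕ)
    (hk : 1 ≤ k) (hn : 1 ≤ n)
    (hx : x = (k + 1) * m) (hxn : x < n) (hpos : k * m < n)
    (hdecomp : n - k * m = a * (k + 1) ^ b) (hnd : ¬ (k + 1) ∣ a)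
    (haq : a = (k + 1) * q + r) (hr1 : 0 < r) (hr2 : r < k + 1) :
    elimTime n k x = n - q := by
  subst hx
  have hkm : (k+1)*m < n := hxn
  have hfuelbig : (k+1)*m + 4*(n - k*m) ≤ (k+2)*(n+1)*(n+1) := by
    have h1 : 4*n ≤ (n+1)*(n+1) := by nlinarith
    have h2 : (k+2)*(4*n) ≤ (k+2)*((n+1)*(n+1)) := Nat.mul_le_mul_left _ h1
    have h3 : (k+2)*(n+1)*(n+1) = (k+2)*((n+1)*(n+1)) := by ring
    have h4 : (k+2)*(4*n) = 4*(k*n) + 8*n := by ring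
    omega
  obtain ⟨f₂, hf⟩ : ∃ f₂, (k+2)*(n+1)*(n+1) = f₂ + (k+1)*m ∧ 4*(n - k*m) ≤ f₂ :=
    ⟨(k+2)*(n+1)*(n+1) - (k+1)*m, by omega⟩
  unfold elimTime elimOrder
  rw [hf.1]
  rw [rounds k hk m (List.range n) f₂ (by simp; omega)]
  have hdr : (List.range n).drop ((k+1)*m) = (k+1)*m :: (List.range n).drop ((k+1)*m + 1) := by
    rw [List.drop_eq_getElem_cons (by simpa using hkm)]
    simp
  have hslen : ((List.range n).drop ((k+1)*m) ++ skippedL k m (List.range n)).length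
      = n - k*m := by
    simp [skippedL_length]
    have hexp : (k+1)*m = k*m + m := by ring
    omega
  obtain ⟨L, R, hEq, hRlen, hMs⟩ := G k hk (n - k*m) a b q r hdecomp hnd haq hr1 hr2
    _ f₂ hslen hf.2
  have hhead : ((List.range n).drop ((k+1)*m) ++ skippedL k m (List.range n)).headD 0
      = (k+1)*m := by rw [hdr]; rfl
  rw [hhead] at hEq hMs
  rw [hEq]
  obtain ⟨K, hK⟩ : ∃ K', killedL k m (List.range n) = K' := ⟨_, rfl⟩
  rw [hK]
  have hperm := killed_skipped_perm k m (List.range n) (by simp; omega)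
  rw [hK] at hperm
  have hmsTotal : (↑(K ++ (L ++ (k+1)*m :: R)) : Multiset ℕ) = ↑(List.range n) := by
    push_cast [← Multiset.coe_add] at hMs hperm ⊢
    rw [hMs]
    conv_rhs => rw [← List.take_append_drop ((k+1)*m) (List.range n)]
    push_cast [← Multiset.coe_add]
    rw [← hperm]
    ac_rfl
  have hpermL : (K ++ (L ++ (k+1)*m :: R)).Perm (List.range n) :=
    Multiset.coe_eq_coe.mp hmsTotal
  have hnodup : (K ++ (L ++ (k+1)*m :: R)).Nodup :=
    (hpermL.nodup_iff).mpr (List.nodup_range (n := n))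
  have hlen2 : K.length + (L.length + (R.length + 1)) = n := by
    have := hpermL.length_eq
    simp at this
    omega
  have hassoc : K ++ (L ++ (k+1)*m :: R) = (K ++ L) ++ (k+1)*m :: R := by
    rw [List.append_assoc]
  rw [hassoc] at hnodup ⊢
  have hnotmem : (k+1)*m ∉ K ++ L := by
    have hd := List.disjoint_of_nodup_append hnodup
    exact fun hmem => hd hmem List.mem_cons_self
  rw [indexOf_concat _ _ _ hnotmem]
  simp only [List.length_append]
  omega
end

section
/- In the Feline Texas Chainsaw Josephus game, for any k ≥ 1, ℓ ≥ 1, and n ≥ k, the survivor of the game with (k+1)n soldiers equals k+1 times the survivor of the game with n soldiers: T((k+1)n, k, ℓ) = (k+1)·T(n, k, ℓ). -/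
namespace FelineAux

def totLives (s : List (ℕ × ℕ)) : ℕ := (s.map Prod.snd).sum

def hitAll (L : List (ℕ × ℕ)) : List (ℕ × ℕ) :=
  L.filterMap (fun p => if p.2 ≤ 1 then none else some (p.1, p.2 - 1))

lemma hitOne_cons_cons (x l : ℕ) (a : ℕ × ℕ) (r : List (ℕ × ℕ)) :
    hitOne ((x, l) :: a :: r) = if l ≤ 1 then a :: r else (a :: r) ++ [(x, l - 1)] := rfl

lemma hitIter (L T : List (ℕ × ℕ)) (hT : T ≠ []) :
    hitOne^[L.length] (L ++ T) = T ++ hitAll L := by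
  induction L generalizing T with
  | nil => simp [hitAll]
  | cons p L ih =>
    obtain ⟨x, l⟩ := p
    have hne : L ++ T ≠ [] := by simp [hT]
    obtain ⟨a, r, hr⟩ := List.exists_cons_of_ne_nil hne
    rw [List.length_cons, Function.iterate_succ_apply, List.cons_append, hr,
      hitOne_cons_cons, ← hr]
    by_cases hl : l ≤ 1
    · rw [if_pos hl, ih T hT]
      simp [hitAll, hl]
    · rw [if_neg hl, List.append_assoc, ih (T ++ [(x, l - 1)]) (by simp)]
      simp [hitAll, hl]

lemma round_group (k : ℕ) (m : ℕ × ℕ) (mem T : List (ℕ × ℕ)) (hm : mem.length = k) :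
    felineRound k ((m :: mem) ++ T) = T ++ m :: hitAll mem := by
  have hskip : skipOne ((m :: mem) ++ T) = mem ++ (T ++ [m]) := by simp [skipOne]
  rw [felineRound, hskip, ← hm, hitIter mem (T ++ [m]) (by simp)]
  simp

lemma run_step (k f : ℕ) (s : List (ℕ × ℕ)) (hs : 2 ≤ s.length) :
    felineRun k (f + 1) s = felineRun k f (felineRound k s) := by
  rw [felineRun, if_neg (by omega)]

lemma run_short (k f : ℕ) (s : List (ℕ × ℕ)) (hs : s.length ≤ 1) :
    felineRun k f s = (s.headD (0, 0)).1 := by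
  cases f with
  | zero => rfl
  | succ f => rw [felineRun, if_pos hs]

end FelineAux
namespace FelineAux

def grp (k j x : ℕ) : List (ℕ × ℕ) := (List.range k).map (fun i => ((k+1)*x+1+i, j))

def grpC (k ℓ j x : ℕ) : List (ℕ × ℕ) := ((k+1)*x, ℓ) :: grp k j x

lemma hitAll_grp (k j x : ℕ) (hj : 2 ≤ j) : hitAll (grp k j x) = grp k (j-1) x := by
  simp only [hitAll, grp, List.filterMap_map, Function.comp_def,
    show ∀ i:ℕ, ¬ j ≤ 1 by omega, if_false, if_neg (show ¬ j ≤ 1 by omega)]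
  generalize List.range k = L
  induction L with
  | nil => rfl
  | cons a L ih => simp [ih]

lemma hitAll_grp_one (k x : ℕ) : hitAll (grp k 1 x) = [] := by
  simp [hitAll, grp, List.filterMap_map, Function.comp_def]

lemma pass (k ℓ j : ℕ) (hk : 1 ≤ k) (xs : List ℕ) (T : List (ℕ × ℕ)) (f : ℕ) :
    felineRun k (xs.length + f) ((xs.flatMap (grpC k ℓ j)) ++ T)
      = felineRun k f (T ++ xs.flatMap (fun x => ((k+1)*x, ℓ) :: hitAll (grp k j x))) := by
  induction xs generalizing T with
  | nil => simp
  | cons x xs ih =>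
    have hlen : 2 ≤ (((x :: xs).flatMap (grpC k ℓ j)) ++ T).length := by
      simp [grpC, grp]
      omega
    rw [List.length_cons, show xs.length + 1 + f = (xs.length + f) + 1 by omega,
      run_step _ _ _ hlen]
    have hstate : (x :: xs).flatMap (grpC k ℓ j) ++ T
        = ((((k+1)*x, ℓ)) :: grp k j x) ++ (xs.flatMap (grpC k ℓ j) ++ T) := by
      simp [grpC]
    rw [hstate, round_group k _ _ _ (by simp [grp])]
    have := ih (T ++ (((k+1)*x, ℓ) :: hitAll (grp k j x)))
    simp only [List.append_assoc] at this ⊢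
    rw [this]
    simp

end FelineAux
namespace FelineAux

lemma passes (k ℓ n : ℕ) (hk : 1 ≤ k) : ∀ j, 1 ≤ j → ∀ f : ℕ,
    felineRun k (n * j + f) ((List.range n).flatMap (grpC k ℓ j))
      = felineRun k f ((List.range n).map (fun x => ((k+1)*x, ℓ))) := by
  intro j
  induction j with
  | zero => omega
  | succ j ih =>
    intro _ f
    rcases Nat.eq_zero_or_pos j with hj | hj
    · subst hj
      have h := pass k ℓ 1 hk (List.range n) [] f
      simp only [hitAll_grp_one, List.length_range, List.nil_append, List.append_nil] at h
      rw [show n * 1 = n by ring, h]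
      congr 1
      generalize List.range n = L
      induction L with
      | nil => rfl
      | cons a L ihL => simp_all
    · have h := pass k ℓ (j+1) hk (List.range n) [] (n * j + f)
      simp only [List.length_range, List.nil_append, List.append_nil,
        hitAll_grp k (j+1) _ (by omega), Nat.add_sub_cancel] at h
      rw [show n * (j+1) + f = n + (n * j + f) by ring, h]
      exact ih hj f

lemma decomp (k ℓ n : ℕ) :
    (List.range ((k+1)*n)).map (fun i => (i, ℓ)) = (List.range n).flatMap (grpC k ℓ ℓ) := by
  induction n with
  | zero => simp
  | succ n ih =>
    rw [List.range_succ, show (k+1)*(n+1) = (k+1)*n + (k+1) by ring, List.range_add,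
      List.map_append, ih, List.flatMap_append]
    congr 1
    simp only [List.flatMap_cons, List.flatMap_nil, List.append_nil]
    rw [List.range_succ_eq_map]
    simp only [List.map_cons, List.map_map, grpC, grp, Function.comp_def]
    refine List.cons_eq_cons.mpr ⟨by simp, ?_⟩
    refine List.map_congr_left (fun a ha => ?_)
    simp only [List.mem_range] at ha
    simp only [Prod.mk.injEq, eq_self_iff_true, and_true]
    omega

end FelineAux
namespace FelineAux

lemma skipOne_ne_nil {s : List (ℕ × ℕ)} (h : s ≠ []) : skipOne s ≠ [] := by
  cases s with
  | nil => exact absurd rfl h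
  | cons p r => simp [skipOne]

lemma hitOne_ne_nil {s : List (ℕ × ℕ)} (h : s ≠ []) : hitOne s ≠ [] := by
  match s with
  | [] => exact absurd rfl h
  | [p] => simp [hitOne]
  | (x, l) :: a :: r =>
    rw [hitOne_cons_cons]
    split <;> simp

lemma round_ne_nil (k : ℕ) {s : List (ℕ × ℕ)} (h : s ≠ []) : felineRound k s ≠ [] := by
  rw [felineRound]
  have := skipOne_ne_nil h
  generalize skipOne s = t at this
  induction k generalizing t with
  | zero => simpa
  | succ k ih =>
    rw [Function.iterate_succ_apply]
    exact ih _ (hitOne_ne_nil this)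

lemma skipOne_map (c : ℕ) (s : List (ℕ × ℕ)) :
    skipOne (s.map (fun p => (c * p.1, p.2))) = (skipOne s).map (fun p => (c * p.1, p.2)) := by
  cases s <;> simp [skipOne]

lemma hitOne_map (c : ℕ) (s : List (ℕ × ℕ)) :
    hitOne (s.map (fun p => (c * p.1, p.2))) = (hitOne s).map (fun p => (c * p.1, p.2)) := by
  match s with
  | [] => rfl
  | [p] => rfl
  | (x, l) :: a :: r =>
    simp only [List.map_cons, hitOne_cons_cons]
    split <;> simp

lemma round_map (k c : ℕ) (s : List (ℕ × ℕ)) :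
    felineRound k (s.map (fun p => (c * p.1, p.2)))
      = (felineRound k s).map (fun p => (c * p.1, p.2)) := by
  rw [felineRound, felineRound, skipOne_map]
  generalize skipOne s = t
  induction k generalizing t with
  | zero => simp
  | succ k ih =>
    rw [Function.iterate_succ_apply, Function.iterate_succ_apply, hitOne_map]
    exact ih _

lemma run_map (k c : ℕ) : ∀ (f : ℕ) (s : List (ℕ × ℕ)), s ≠ [] →
    felineRun k f (s.map (fun p => (c * p.1, p.2))) = c * felineRun k f s := by
  intro f
  induction f with
  | zero =>
    intro s hs
    obtain ⟨p, r, rfl⟩ := List.exists_cons_of_ne_nil hs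
    rfl
  | succ f ih =>
    intro s hs
    rw [felineRun, felineRun, List.length_map]
    by_cases hlen : s.length ≤ 1
    · rw [if_pos hlen, if_pos hlen]
      obtain ⟨p, r, rfl⟩ := List.exists_cons_of_ne_nil hs
      rfl
    · rw [if_neg hlen, if_neg hlen, round_map]
      exact ih _ (round_ne_nil k hs)

end FelineAux
namespace FelineAux

lemma tot_skip (s : List (ℕ × ℕ)) : totLives (skipOne s) = totLives s := by
  cases s <;> simp [skipOne, totLives] <;> omega

lemma len_skip (s : List (ℕ × ℕ)) : (skipOne s).length = s.length := by
  cases s <;> simp [skipOne]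

lemma hit_le (s : List (ℕ × ℕ)) : totLives (hitOne s) ≤ totLives s := by
  match s with
  | [] => exact le_refl _
  | [p] => exact le_refl _
  | (x, l) :: a :: r =>
    rw [hitOne_cons_cons]
    split <;> simp [totLives] <;> omega

lemma hit_lt (s : List (ℕ × ℕ)) (hs : 2 ≤ s.length) (hinv : ∀ p ∈ s, 1 ≤ p.2) :
    totLives (hitOne s) < totLives s := by
  match s with
  | [] => simp at hs
  | [p] => simp at hs
  | (x, l) :: a :: r =>
    have hl : 1 ≤ l := hinv (x, l) (by simp)
    rw [hitOne_cons_cons]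
    split <;> simp [totLives] <;> omega

lemma hits_le (m : ℕ) (s : List (ℕ × ℕ)) : totLives (hitOne^[m] s) ≤ totLives s := by
  induction m generalizing s with
  | zero => exact le_refl _
  | succ m ih =>
    rw [Function.iterate_succ_apply]
    exact le_trans (ih _) (hit_le s)

lemma inv_skip {s : List (ℕ × ℕ)} (h : ∀ p ∈ s, 1 ≤ p.2) : ∀ p ∈ skipOne s, 1 ≤ p.2 := by
  cases s with
  | nil => simp [skipOne]
  | cons q r =>
    intro p hp
    simp only [skipOne, List.mem_append, List.mem_singleton] at hp
    rcases hp with hp | rfl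
    · exact h p (by simp [hp])
    · exact h p (by simp)

lemma inv_hit {s : List (ℕ × ℕ)} (h : ∀ p ∈ s, 1 ≤ p.2) : ∀ p ∈ hitOne s, 1 ≤ p.2 := by
  match s with
  | [] => simp [hitOne]
  | [p] => exact fun q hq => h q (by simpa [hitOne] using hq)
  | (x, l) :: a :: r =>
    rw [hitOne_cons_cons]
    have hl : ¬ l ≤ 1 → 2 ≤ l := by omega
    intro p hp
    split at hp
    · exact h p (by simp_all)
    · simp only [List.mem_append, List.mem_singleton] at hp
      rcases hp with hp | rfl
      · exact h p (by simp_all)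
      · simp only
        omega

lemma inv_round (k : ℕ) {s : List (ℕ × ℕ)} (h : ∀ p ∈ s, 1 ≤ p.2) :
    ∀ p ∈ felineRound k s, 1 ≤ p.2 := by
  rw [felineRound]
  have := inv_skip h
  generalize skipOne s = t at this
  induction k generalizing t with
  | zero => simpa
  | succ k ih =>
    rw [Function.iterate_succ_apply]
    exact ih _ (inv_hit this)

lemma len_le_tot (s : List (ℕ × ℕ)) (h : ∀ p ∈ s, 1 ≤ p.2) : s.length ≤ totLives s := by
  induction s with
  | nil => simp [totLives]
  | cons p r ih =>
    have h1 := h p (by simp)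
    have h2 := ih (fun q hq => h q (by simp [hq]))
    simp only [totLives, List.map_cons, List.sum_cons, List.length_cons]
    simp only [totLives] at h2
    omega

lemma round_tot_lt (k : ℕ) (hk : 1 ≤ k) (s : List (ℕ × ℕ)) (hs : 2 ≤ s.length)
    (hinv : ∀ p ∈ s, 1 ≤ p.2) : totLives (felineRound k s) < totLives s := by
  obtain ⟨k', rfl⟩ : ∃ k', k = k' + 1 := ⟨k - 1, by omega⟩
  rw [felineRound, Function.iterate_succ_apply]
  calc totLives (hitOne^[k'] (hitOne (skipOne s))) ≤ totLives (hitOne (skipOne s)) :=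
        hits_le _ _
    _ < totLives (skipOne s) :=
        hit_lt _ (by rw [len_skip]; exact hs) (inv_skip hinv)
    _ = totLives s := tot_skip s

lemma run_fuel (k : ℕ) (hk : 1 ≤ k) : ∀ (f1 f2 : ℕ) (s : List (ℕ × ℕ)),
    (∀ p ∈ s, 1 ≤ p.2) → totLives s ≤ f1 + 1 → totLives s ≤ f2 + 1 →
    felineRun k f1 s = felineRun k f2 s := by
  intro f1
  induction f1 with
  | zero =>
    intro f2 s hinv h1 h2
    have : s.length ≤ 1 := le_trans (len_le_tot s hinv) h1
    rw [run_short k 0 s this, run_short k f2 s this]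
  | succ f1 ih =>
    intro f2 s hinv h1 h2
    by_cases hlen : s.length ≤ 1
    · rw [run_short k _ s hlen, run_short k _ s hlen]
    · have hlen2 : 2 ≤ s.length := by omega
      have htot : 2 ≤ totLives s := le_trans hlen2 (len_le_tot s hinv)
      obtain ⟨f2', rfl⟩ : ∃ f2', f2 = f2' + 1 := ⟨f2 - 1, by omega⟩
      rw [run_step k f1 s hlen2, run_step k f2' s hlen2]
      have hlt := round_tot_lt k hk s hlen2 hinv
      exact ih f2' _ (inv_round k hinv) (by omega) (by omega)

end FelineAux
namespace FelineAux

lemma tot_init (n ℓ : ℕ) : totLives ((List.range n).map (fun i => (i, ℓ))) = n * ℓ := by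
  simp only [totLives, List.map_map, Function.comp_def]
  induction n with
  | zero => simp
  | succ n ih => rw [List.range_succ]; simp [ih]; ring

end FelineAux


/-- Multiplicative reduction lemma for the Feline Texas Chainsaw Josephus game:
`T((k+1)n, k, ℓ) = (k+1)·T(n, k, ℓ)` for `n ≥ k`. -/
theorem feline_scale (n k ℓ : ℕ) (hk : 1 ≤ k) (hl : 1 ≤ ℓ) (hn : k ≤ n) :
    felineT ((k + 1) * n) k ℓ = (k + 1) * felineT n k ℓ := by
  open FelineAux in
  have hn1 : 1 ≤ n := le_trans hk hn
  have hsne : (List.range n).map (fun i => (i, ℓ)) ≠ [] := by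
    simp only [ne_eq, List.map_eq_nil_iff, List.range_eq_nil]
    omega
  have hinv : ∀ p ∈ (List.range n).map (fun i => (i, ℓ)), 1 ≤ p.2 := by
    intro p hp
    simp only [List.mem_map] at hp
    obtain ⟨i, _, rfl⟩ := hp
    exact hl
  rw [felineT, decomp k ℓ n,
    show (k + 1) * n * ℓ + 1 = n * ℓ + (k * n * ℓ + 1) by ring,
    passes k ℓ n hk ℓ hl (k * n * ℓ + 1)]
  have hB : (List.range n).map (fun x => ((k+1)*x, ℓ))
      = ((List.range n).map (fun i => (i, ℓ))).map (fun p => ((k+1) * p.1, p.2)) := by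
    simp [List.map_map, Function.comp_def]
  rw [hB, run_map k (k+1) (k * n * ℓ + 1) _ hsne, felineT]
  congr 1
  have h1 : n * ℓ ≤ k * n * ℓ := by
    rw [mul_assoc]
    exact Nat.le_mul_of_pos_left _ hk
  exact run_fuel k hk (k * n * ℓ + 1) (n * ℓ + 1) _ hinv
    (by rw [tot_init]; omega) (by rw [tot_init]; omega)
end

section
/- For the Texas Chainsaw Josephus game with qk soldiers (q ≥ 1, k ≥ 1): T(qk, k) = (k+1)(q - (k+1)^b), where b = ⌊log_{k+1} q⌋ (i.e., b is the largest integer with (k+1)^b ≤ q). -/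
-- auxiliary abstract game on labels
def rot (L : List ℕ) : List ℕ :=
  match L with
  | [] => []
  | a :: r => r ++ [a]

def bhd (L : List ℕ) : List ℕ :=
  match L with
  | [] => []
  | [x] => [x]
  | _ :: r => r

def rnd' (k : ℕ) (L : List ℕ) : List ℕ := bhd^[k] (rot L)

def run' (k : ℕ) : ℕ → List ℕ → ℕ
  | 0, L => L.headD 0
  | f + 1, L => if L.length ≤ 1 then L.headD 0 else run' k f (rnd' k L)

lemma skipOne_map (L : List ℕ) :
    skipOne (L.map (fun x => (x, 1))) = (rot L).map (fun x => (x, 1)) := by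
  cases L <;> simp [skipOne, rot]

lemma hitOne_map (L : List ℕ) :
    hitOne (L.map (fun x => (x, 1))) = (bhd L).map (fun x => (x, 1)) := by
  match L with
  | [] => rfl
  | [x] => rfl
  | a :: b :: r => simp [hitOne, bhd]

lemma hitOne_iter_map (k : ℕ) (L : List ℕ) :
    hitOne^[k] (L.map (fun x => (x, 1))) = (bhd^[k] L).map (fun x => (x, 1)) := by
  induction k generalizing L with
  | zero => rfl
  | succ k ih =>
      rw [Function.iterate_succ_apply, Function.iterate_succ_apply, hitOne_map, ih]

lemma felineRound_map (k : ℕ) (L : List ℕ) :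
    felineRound k (L.map (fun x => (x, 1))) = (rnd' k L).map (fun x => (x, 1)) := by
  rw [felineRound, skipOne_map, rnd', hitOne_iter_map]

lemma felineRun_eq_run' (k f : ℕ) (L : List ℕ) :
    felineRun k f (L.map (fun x => (x, 1))) = run' k f L := by
  induction f generalizing L with
  | zero => cases L <;> simp [felineRun, run']
  | succ f ih =>
      simp only [felineRun, run', List.length_map]
      split
      · cases L <;> simp
      · rw [felineRound_map, ih]

lemma chainsawT_eq (n k : ℕ) : chainsawT n k = run' k (n + 1) (List.range n) := by
  rw [chainsawT, felineT, mul_one]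
  exact felineRun_eq_run' k (n + 1) (List.range n)

lemma bhd_map (g : ℕ → ℕ) (L : List ℕ) : bhd (L.map g) = (bhd L).map g := by
  match L with
  | [] => rfl
  | [x] => rfl
  | a :: b :: r => rfl

lemma rot_map (g : ℕ → ℕ) (L : List ℕ) : rot (L.map g) = (rot L).map g := by
  cases L <;> simp [rot]

lemma bhd_iter_map (k : ℕ) (g : ℕ → ℕ) (L : List ℕ) :
    bhd^[k] (L.map g) = (bhd^[k] L).map g := by
  induction k generalizing L with
  | zero => rfl
  | succ k ih =>
      rw [Function.iterate_succ_apply, Function.iterate_succ_apply, bhd_map, ih]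

lemma rnd'_map (k : ℕ) (g : ℕ → ℕ) (L : List ℕ) :
    rnd' k (L.map g) = (rnd' k L).map g := by
  rw [rnd', rnd', rot_map, bhd_iter_map]

lemma bhd_ne_nil {L : List ℕ} (h : L ≠ []) : bhd L ≠ [] := by
  match L with
  | [x] => simp [bhd]
  | a :: b :: r => simp [bhd]

lemma rot_ne_nil {L : List ℕ} (h : L ≠ []) : rot L ≠ [] := by
  match L with
  | a :: r => simp [rot]

lemma rnd'_ne_nil {k : ℕ} {L : List ℕ} (h : L ≠ []) : rnd' k L ≠ [] := by
  rw [rnd']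
  induction k with
  | zero => exact rot_ne_nil h
  | succ k ih => rw [Function.iterate_succ_apply']; exact bhd_ne_nil ih

lemma run'_map (k : ℕ) (g : ℕ → ℕ) :
    ∀ f (L : List ℕ), L ≠ [] → run' k f (L.map g) = g (run' k f L) := by
  intro f
  induction f with
  | zero =>
      intro L h
      match L with
      | a :: r => rfl
  | succ f ih =>
      intro L h
      simp only [run', List.length_map]
      split
      · match L with
        | a :: r => rfl
      · rw [rnd'_map, ih _ (rnd'_ne_nil h)]

lemma length_bhd_le (L : List ℕ) : (bhd L).length ≤ L.length := by
  match L with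
  | [] => simp [bhd]
  | [x] => simp [bhd]
  | a :: b :: r => simp [bhd]

lemma bhd_eq_tail {L : List ℕ} (h : 2 ≤ L.length) : bhd L = L.tail := by
  match L with
  | a :: b :: r => rfl

lemma bhd_iter_drop : ∀ (j : ℕ) (L : List ℕ), j < L.length → bhd^[j] L = L.drop j := by
  intro j
  induction j with
  | zero => simp
  | succ j ih =>
      intro L h
      rw [Function.iterate_succ_apply, bhd_eq_tail (by omega), ih L.tail (by simp; omega)]
      rw [← List.drop_one, List.drop_drop, Nat.add_comm]

lemma bhd_singleton (x : ℕ) : bhd [x] = [x] := rfl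

lemma run'_singleton (k : ℕ) (f : ℕ) (x : ℕ) : run' k f [x] = x := by
  cases f <;> simp [run']

lemma length_bhd_iter_le (j : ℕ) (L : List ℕ) : (bhd^[j] L).length ≤ L.length := by
  induction j generalizing L with
  | zero => simp
  | succ j ih =>
      rw [Function.iterate_succ_apply]
      exact (ih _).trans (length_bhd_le L)

lemma length_rnd'_le {k : ℕ} (hk : 1 ≤ k) {L : List ℕ} (h : 2 ≤ L.length) :
    (rnd' k L).length + 1 ≤ L.length := by
  obtain ⟨k, rfl⟩ : ∃ k', k = k' + 1 := ⟨k - 1, by omega⟩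
  rw [rnd', Function.iterate_succ_apply]
  have h1 : (rot L).length = L.length := by
    match L with
    | a :: r => simp [rot]
  have h2 : (bhd (rot L)).length + 1 = L.length := by
    rw [bhd_eq_tail (by omega)]
    simp; omega
  have := length_bhd_iter_le k (bhd (rot L))
  omega

lemma run'_step (k : ℕ) (hk : 1 ≤ k) :
    ∀ f (L : List ℕ), L.length ≤ f + 1 → run' k (f + 1) L = run' k f L := by
  intro f
  induction f with
  | zero =>
      intro L h
      simp only [run']
      rw [if_pos h]
  | succ f ih =>
      intro L h
      by_cases h1 : L.length ≤ 1
      · simp only [run']; rw [if_pos h1, if_pos h1]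
      · have h2 : 2 ≤ L.length := by omega
        have h3 := length_rnd'_le hk h2
        conv_lhs => rw [run']
        rw [if_neg h1]
        conv_rhs => rw [run']
        rw [if_neg h1]
        exact ih _ (by omega)

lemma run'_fuel (k : ℕ) (hk : 1 ≤ k) (L : List ℕ) :
    ∀ f f', L.length ≤ f + 1 → f ≤ f' → run' k f' L = run' k f L := by
  intro f f' h hle
  induction f', hle using Nat.le_induction with
  | base => rfl
  | succ f' hle ih => rw [run'_step k hk f' L (by omega), ih]


lemma rot_range {n : ℕ} (hn : 1 ≤ n) :
    rot (List.range n) = (List.range (n - 1)).map Nat.succ ++ [0] := by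
  obtain ⟨s, rfl⟩ : ∃ s, n = s + 1 := ⟨n - 1, by omega⟩
  rw [List.range_succ_eq_map, rot]
  simp

lemma rnd'_range {n k : ℕ} (hn : k + 1 ≤ n) :
    rnd' k (List.range n) =
      (List.range (n - k - 1)).map (fun i => i + (k + 1)) ++ [0] := by
  rw [rnd', rot_range (by omega), bhd_iter_drop k _ (by simp; omega)]
  rw [List.drop_append_of_le_length (by simp; omega), ← List.map_drop]
  have : List.range (n - 1) = List.range (k + (n - k - 1)) := by congr 1; omega
  rw [this, List.range_add, List.drop_left' (by simp), List.map_map]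
  congr 1
  apply List.map_congr_left
  intro a _
  simp [Nat.succ_eq_add_one]
  omega

lemma range_map_mod {n k : ℕ} (hk : 1 ≤ k) (hn : k + 1 ≤ n) :
    (List.range (n - k)).map (fun i => (i + (k + 1)) % n) =
      (List.range (n - k - 1)).map (fun i => i + (k + 1)) ++ [0] := by
  have h1 : n - k = (n - k - 1) + 1 := by omega
  rw [h1, List.range_succ, List.map_append]
  congr 1
  · apply List.map_congr_left
    intro a ha
    simp only [List.mem_range] at ha
    exact Nat.mod_eq_of_lt (by omega)
  · simp only [List.map_cons, List.map_nil]
    congr 1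
    have : n - k - 1 + (k + 1) = n := by omega
    rw [this, Nat.mod_self]

lemma chainsaw_rec_s13 (q k : ℕ) (hq : 1 ≤ q) (hk : 1 ≤ k) :
    chainsawT ((q + 1) * k) k = (chainsawT (q * k) k + (k + 1)) % ((q + 1) * k) := by
  set n := (q + 1) * k with hn
  set m := q * k with hm
  have hnm : n = m + k := by rw [hn, hm]; ring
  have hm1 : 1 ≤ m := Nat.mul_pos hq hk
  have hn2 : 2 ≤ n := by nlinarith
  have hnk : k + 1 ≤ n := by omega
  rw [chainsawT_eq n k]
  have step1 : run' k (n + 1) (List.range n) = run' k n (rnd' k (List.range n)) := by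
    rw [run']
    rw [if_neg (by simp; omega)]
  rw [step1, rnd'_range hnk, ← range_map_mod hk hnk]
  have hmn : n - k = m := by omega
  rw [hmn]
  rw [run'_map k _ n (List.range m) (by simp; omega)]
  rw [run'_fuel k hk (List.range m) (m + 1) n (by simp only [List.length_range]; omega) (by omega)]
  rw [← chainsawT_eq m k]

lemma chainsaw_base_s13 (k : ℕ) (hk : 1 ≤ k) : chainsawT (1 * k) k = 0 := by
  rw [one_mul, chainsawT_eq, run']
  split
  · have hk1 : k = 1 := by rename_i h; simp at h; omega
    subst hk1
    rfl
  · have hk2 : 2 ≤ k := by rename_i h; simp at h; omega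
    have hr : rnd' k (List.range k) = [0] := by
      rw [rnd']
      obtain ⟨k', rfl⟩ : ∃ k', k = k' + 1 := ⟨k - 1, by omega⟩
      rw [Function.iterate_succ_apply', rot_range (by omega),
        bhd_iter_drop k' _ (by simp only [List.length_append, List.length_map,
          List.length_range, List.length_cons, List.length_nil]; omega)]
      rw [List.drop_append_of_le_length
        (by simp only [List.length_map, List.length_range]; omega)]
      have h0 : List.drop k' ((List.range (k' + 1 - 1)).map Nat.succ) = [] := by
        apply List.drop_eq_nil_of_le
        simp only [List.length_map, List.length_range]
        omega
      rw [h0, List.nil_append]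
      rfl
    rw [hr, run'_singleton]

/-- For the Texas Chainsaw Josephus game with `qk` soldiers:
`T(qk, k) = (k+1)(q - (k+1)^b)` where `b = ⌊log_{k+1} q⌋`. -/
theorem chainsaw_qk (q k b : ℕ) (hq : 1 ≤ q) (hk : 1 ≤ k)
    (hb : b = Nat.log (k + 1) q) :
    chainsawT (q * k) k = (k + 1) * (q - (k + 1) ^ b) := by
  subst hb
  induction q, hq using Nat.le_induction with
  | base =>
      rw [chainsaw_base_s13 k hk, Nat.log_one_right, pow_zero]
      simp
  | succ q hq ih =>
      set p := (k + 1) ^ Nat.log (k + 1) q with hp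
      have hble : p ≤ q := Nat.pow_log_le_self (k + 1) (by omega)
      have hblt : q < (k + 1) ^ (Nat.log (k + 1) q + 1) :=
        Nat.lt_pow_succ_log_self (by omega) q
      have hpow : (k + 1) ^ (Nat.log (k + 1) q + 1) = p * (k + 1) := by
        rw [hp, pow_succ]
      rw [chainsaw_rec_s13 q k hq hk, ih]
      have key : (k + 1) * (q - p) + (k + 1) = (k + 1) * (q + 1 - p) := by
        have h2 : q + 1 - p = (q - p) + 1 := by omega
        rw [h2, Nat.mul_add, Nat.mul_one]
      rw [key]
      by_cases hcase : q + 1 = p * (k + 1)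
      · have hlog : Nat.log (k + 1) (q + 1) = Nat.log (k + 1) q + 1 := by
          rw [hcase, ← hpow, Nat.log_pow (by omega)]
        rw [hlog, hpow, ← hcase]
        simp only [Nat.sub_self, Nat.mul_zero]
        have hval : (k + 1) * (q + 1 - p) = (q + 1) * k := by
          have h1 : q + 1 - p = p * k := by
            have h3 : p * (k + 1) = p * k + p := by ring
            omega
          rw [h1, hcase]
          ring
        rw [hval, Nat.mod_self]
      · have hlt : q + 1 < p * (k + 1) := by
          rw [hpow] at hblt; omega
        have hlog : Nat.log (k + 1) (q + 1) = Nat.log (k + 1) q := by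
          apply Nat.log_eq_of_pow_le_of_lt_pow (by rw [← hp]; omega)
          rw [hpow]; omega
        rw [hlog, ← hp]
        apply Nat.mod_eq_of_lt
        have hd : q + 1 - p < p * k := by
          have h3 : p * (k + 1) = p * k + p := by ring
          omega
        calc (k + 1) * (q + 1 - p) = k * (q + 1 - p) + (q + 1 - p) := by ring
          _ < k * (q + 1 - p) + p * k := by omega
          _ = k * ((q + 1 - p) + p) := by ring
          _ = (q + 1) * k := by rw [show q + 1 - p + p = q + 1 by omega]; ring
end
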